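/- arXiv:0706.4343 — 4 statements merged into one kernel-verified Lean document; each statement's English description precedes it below -/
import Mathlib

section
/- Let (X; f_0,…,f_{n−1}) be an iterated function system on a compact metric space X such that every f_i is a similarity with the same ratio r ∈ (0,1), let 1 < β < n, and let E_β be the β-attractor. Then, with s = log β / (−log r), the s-dimensional Hausdorff measure of E_β is at most (β/(β−1))·|X|^s, where |X| is the diameter of X; in particular dim_H(E_β) ≤ log β / (−log r). -/
open Set Filter MeasureTheory Topology
open scoped ENNReal NNReal

noncomputable def betaT (β x : ℝ) : ℝ := Int.fract (β * x)

noncomputable def betaDigit (β x : ℝ) (n : ℕ) : ℕ := ⌊β * (betaT β)^[n] x⌋₊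

def betaShift (β : ℝ) : Set (ℕ → ℕ) :=
  closure {d | ∃ x ∈ Set.Ico (0 : ℝ) 1, ∀ n, d n = betaDigit β x n}

namespace BetaAux

variable {β : ℝ}

lemma betaT_mem (β x : ℝ) : betaT β x ∈ Set.Ico (0:ℝ) 1 :=
  ⟨Int.fract_nonneg _, Int.fract_lt_one _⟩

lemma iter_mem {x : ℝ} (hx : x ∈ Set.Ico (0:ℝ) 1) (m : ℕ) :
    (betaT β)^[m] x ∈ Set.Ico (0:ℝ) 1 := by
  cases m with
  | zero => exact hx
  | succ m => rw [Function.iterate_succ_apply']; exact betaT_mem β _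

lemma digit_shift (β x : ℝ) (i : ℕ) :
    betaDigit β x (i+1) = betaDigit β (betaT β x) i := by
  simp [betaDigit, Function.iterate_succ_apply]

lemma digit_zero_eq (hβ : 1 < β) {x : ℝ} (hx : x ∈ Set.Ico (0:ℝ) 1) :
    (betaDigit β x 0 : ℝ) = β * x - betaT β x := by
  have h0 : (0:ℝ) ≤ β * x := mul_nonneg (by linarith) hx.1
  have : ((⌊β * x⌋₊ : ℤ) : ℝ) = ((⌊β * x⌋ : ℤ) : ℝ) := by
    rw [Int.natCast_floor_eq_floor h0]
  simp only [betaDigit, Function.iterate_zero_apply, betaT, Int.fract]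
  push_cast at this ⊢
  linarith

lemma expansion (hβ : 1 < β) (k : ℕ) {x : ℝ} (hx : x ∈ Set.Ico (0:ℝ) 1) :
    x = (∑ i ∈ Finset.range k, (betaDigit β x i : ℝ) * β⁻¹ ^ (i+1))
        + β⁻¹ ^ k * (betaT β)^[k] x := by
  have hβ0 : (0:ℝ) < β := by linarith
  induction k generalizing x with
  | zero => simp
  | succ k ih =>
    have hTx : betaT β x ∈ Set.Ico (0:ℝ) 1 := betaT_mem β x
    have h := ih hTx
    have hx0 : x = β⁻¹ * ((betaDigit β x 0 : ℝ) + betaT β x) := by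
      have := digit_zero_eq hβ hx
      field_simp
      linarith
    calc x = β⁻¹ * ((betaDigit β x 0 : ℝ) + betaT β x) := hx0
    _ = β⁻¹ * ((betaDigit β x 0 : ℝ)
          + ((∑ i ∈ Finset.range k, (betaDigit β (betaT β x) i : ℝ) * β⁻¹ ^ (i+1))
            + β⁻¹ ^ k * (betaT β)^[k] (betaT β x))) := by rw [← h]
    _ = (∑ i ∈ Finset.range (k+1), (betaDigit β x i : ℝ) * β⁻¹ ^ (i+1))
        + β⁻¹ ^ (k+1) * (betaT β)^[k+1] x := by
      rw [Finset.sum_range_succ' (fun i => (betaDigit β x i : ℝ) * β⁻¹ ^ (i+1))]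
      simp only [digit_shift, Function.iterate_succ_apply]
      rw [mul_add, mul_add, Finset.mul_sum]
      have hs : ∑ i ∈ Finset.range k, β⁻¹ * ((betaDigit β (betaT β x) i : ℝ) * β⁻¹ ^ (i + 1))
          = ∑ i ∈ Finset.range k, (betaDigit β (betaT β x) i : ℝ) * β⁻¹ ^ (i + 1 + 1) :=
        Finset.sum_congr rfl (fun i _ => by ring)
      rw [hs]
      ring

end BetaAux

namespace BetaAux

variable {β : ℝ}

/-- Cylinder set of a word. -/
def cyl (β : ℝ) {k : ℕ} (w : Fin k → ℕ) : Set ℝ :=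
  {x | x ∈ Set.Ico (0:ℝ) 1 ∧ ∀ i : Fin k, betaDigit β x i = w i}

/-- Value of a word. -/
noncomputable def val (β : ℝ) {k : ℕ} (w : Fin k → ℕ) : ℝ :=
  ∑ i : Fin k, (w i : ℝ) * β⁻¹ ^ ((i : ℕ) + 1)

lemma mem_cyl_decomp (hβ : 1 < β) {k : ℕ} {w : Fin k → ℕ} {x : ℝ} (hx : x ∈ cyl β w) :
    x = val β w + β⁻¹ ^ k * (betaT β)^[k] x := by
  have h := expansion hβ k hx.1
  conv_lhs => rw [h]
  congr 1
  rw [val, Finset.sum_range (fun i => (betaDigit β x i : ℝ) * β⁻¹ ^ (i+1))]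
  exact Finset.sum_congr rfl fun i _ => by rw [hx.2 i]

lemma val_nonneg {k : ℕ} (hβ : 1 < β) (w : Fin k → ℕ) : 0 ≤ val β w :=
  Finset.sum_nonneg fun i _ => mul_nonneg (Nat.cast_nonneg _)
    (pow_nonneg (inv_nonneg.2 (by linarith)) _)

lemma cyl_bounds (hβ : 1 < β) {k : ℕ} {w : Fin k → ℕ} {x : ℝ} (hx : x ∈ cyl β w) :
    val β w ≤ x ∧ x < val β w + β⁻¹ ^ k := by
  have hd := mem_cyl_decomp hβ hx
  have hT := iter_mem (β := β) hx.1 k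
  have hp : (0:ℝ) < β⁻¹ ^ k := pow_pos (inv_pos.2 (by linarith)) _
  constructor
  · nlinarith [hT.1]
  · nlinarith [hT.2]

/-- The value of an admissible word lies in its own cylinder. -/
lemma val_mem_cyl (hβ : 1 < β) : ∀ {k : ℕ} (w : Fin k → ℕ), (cyl β w).Nonempty →
    val β w ∈ cyl β w := by
  intro k
  induction k with
  | zero =>
    intro w _
    refine ⟨⟨?_, ?_⟩, fun i => i.elim0⟩
    · simp [val]
    · simp [val]
  | succ k ih =>
    intro w ⟨x, hx⟩
    set w' : Fin k → ℕ := fun i => w i.succ with hw'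
    have hTx : betaT β x ∈ cyl β w' := by
      refine ⟨betaT_mem β x, fun i => ?_⟩
      rw [← digit_shift]
      exact hx.2 i.succ
    have ihv := ih w' ⟨_, hTx⟩
    have hval : val β w = β⁻¹ * ((w 0 : ℝ) + val β w') := by
      rw [val, Fin.sum_univ_succ]
      simp only [Fin.val_zero, Fin.val_succ]
      rw [val, mul_add, Finset.mul_sum]
      congr 1
      · ring
      · exact Finset.sum_congr rfl fun i _ => by ring
    have hv'0 : 0 ≤ val β w' := val_nonneg hβ w'
    have hv'1 : val β w' < 1 := (ihv.1).2
    have hβ0 : (0:ℝ) < β := by linarith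
    have hbv : β * val β w = (w 0 : ℝ) + val β w' := by
      rw [hval]; field_simp
    have hv01 : val β w ∈ Set.Ico (0:ℝ) 1 := by
      refine ⟨val_nonneg hβ w, ?_⟩
      exact lt_of_le_of_lt (cyl_bounds hβ hx).1 hx.1.2
    have hT0 : betaT β (val β w) = val β w' := by
      rw [betaT, hbv, Int.fract_natCast_add, Int.fract_eq_self.2 ⟨hv'0, hv'1⟩]
    refine ⟨hv01, fun i => ?_⟩
    induction i using Fin.cases with
    | zero =>
      show betaDigit β (val β w) 0 = w 0
      simp only [betaDigit, Function.iterate_zero_apply]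
      rw [hbv]
      rw [Nat.floor_eq_iff (by positivity)]
      constructor
      · simp [hv'0]
      · push_cast; linarith
    | succ i =>
      show betaDigit β (val β w) (i + 1) = w i.succ
      rw [digit_shift, hT0]
      exact ihv.2 i

/-- Strict ordering of cylinders from first digit difference. -/
lemma cyl_lt (hβ : 1 < β) {k : ℕ} {w w' : Fin k → ℕ} {i : Fin k}
    (hlt : w i < w' i) (hagree : ∀ j : Fin k, j < i → w j = w' j)
    {x x' : ℝ} (hx : x ∈ cyl β w) (hx' : x' ∈ cyl β w') : x < x' := by
  have hβ0 : (0:ℝ) < β := by linarith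
  have hp : (0:ℝ) < β⁻¹ ^ ((i:ℕ) + 1) := pow_pos (inv_pos.2 hβ0) _
  have h1 := expansion hβ ((i:ℕ)+1) hx.1
  have h2 := expansion hβ ((i:ℕ)+1) hx'.1
  have hsum : ∀ j ∈ Finset.range ((i:ℕ)+1), j ≠ (i:ℕ) →
      (betaDigit β x j : ℝ) * β⁻¹ ^ (j+1) = (betaDigit β x' j : ℝ) * β⁻¹ ^ (j+1) := by
    intro j hj hne
    have hjk : j < k := lt_of_lt_of_le (Finset.mem_range.1 hj) (Nat.succ_le_of_lt i.2)
    have hji : (⟨j, hjk⟩ : Fin k) < i := by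
      rw [Fin.lt_def]
      exact lt_of_le_of_ne (Nat.lt_succ_iff.1 (Finset.mem_range.1 hj)) hne
    rw [hx.2 ⟨j, hjk⟩, hx'.2 ⟨j, hjk⟩, hagree _ hji]
  -- split the sums at index i
  have e1 : ∑ j ∈ Finset.range ((i:ℕ)+1), (betaDigit β x j : ℝ) * β⁻¹ ^ (j+1)
      = (∑ j ∈ Finset.range (i:ℕ), (betaDigit β x j : ℝ) * β⁻¹ ^ (j+1))
        + (w i : ℝ) * β⁻¹ ^ ((i:ℕ)+1) := by
    rw [Finset.sum_range_succ, hx.2 i]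
  have e2 : ∑ j ∈ Finset.range ((i:ℕ)+1), (betaDigit β x' j : ℝ) * β⁻¹ ^ (j+1)
      = (∑ j ∈ Finset.range (i:ℕ), (betaDigit β x' j : ℝ) * β⁻¹ ^ (j+1))
        + (w' i : ℝ) * β⁻¹ ^ ((i:ℕ)+1) := by
    rw [Finset.sum_range_succ, hx'.2 i]
  have hsums : ∑ j ∈ Finset.range (i:ℕ), (betaDigit β x j : ℝ) * β⁻¹ ^ (j+1)
      = ∑ j ∈ Finset.range (i:ℕ), (betaDigit β x' j : ℝ) * β⁻¹ ^ (j+1) := by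
    refine Finset.sum_congr rfl fun j hj => ?_
    exact hsum j (Finset.mem_range.2 (Nat.lt_succ_of_lt (Finset.mem_range.1 hj)))
      (Nat.ne_of_lt (Finset.mem_range.1 hj))
  have hdig : (w i : ℝ) + 1 ≤ (w' i : ℝ) := by exact_mod_cast hlt
  have hT1 := iter_mem (β := β) hx.1 ((i:ℕ)+1)
  have hT2 := iter_mem (β := β) hx'.1 ((i:ℕ)+1)
  nlinarith [hT1.2, hT2.1]

/-- Dichotomy for distinct nonempty cylinders. -/
lemma cyl_dichotomy (hβ : 1 < β) {k : ℕ} {w w' : Fin k → ℕ} (hne : w ≠ w') :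
    (∀ x ∈ cyl β w, ∀ x' ∈ cyl β w', x < x') ∨
    (∀ x' ∈ cyl β w', ∀ x ∈ cyl β w, x' < x) := by
  have hex : (Finset.univ.filter (fun i : Fin k => w i ≠ w' i)).Nonempty := by
    rw [Finset.filter_nonempty_iff]
    by_contra h
    push_neg at h
    exact hne (funext fun i => h i (Finset.mem_univ i))
  obtain ⟨i, hi, hmin⟩ := Finset.exists_min_image _ id hex
  have hine : w i ≠ w' i := (Finset.mem_filter.1 hi).2
  have hagree : ∀ j : Fin k, j < i → w j = w' j := by
    intro j hj
    by_contra hc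
    have : i ≤ j := hmin j (Finset.mem_filter.2 ⟨Finset.mem_univ _, hc⟩)
    exact absurd hj (not_lt.2 this)
  rcases lt_or_gt_of_ne hine with h | h
  · exact Or.inl fun x hx x' hx' => cyl_lt hβ h hagree hx hx'
  · exact Or.inr fun x' hx' x hx => cyl_lt hβ h (fun j hj => (hagree j hj).symm) hx' hx

end BetaAux

namespace BetaAux

variable {β : ℝ}

lemma digit_le (hβ : 1 < β) {x : ℝ} (hx : x ∈ Set.Ico (0:ℝ) 1) (i : ℕ) :
    betaDigit β x i ≤ ⌊β⌋₊ := by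
  have hT := iter_mem (β := β) hx i
  exact Nat.floor_le_floor (by nlinarith [hT.1, hT.2])

lemma adm_finite (hβ : 1 < β) (k : ℕ) : {w : Fin k → ℕ | (cyl β w).Nonempty}.Finite := by
  apply Set.Finite.subset (Set.Finite.pi (fun _ : Fin k => Set.finite_Iic ⌊β⌋₊))
  rintro w ⟨x, hx⟩ i -
  rw [← hx.2 i]
  exact digit_le hβ hx.1 (i : ℕ)

/-- The finset of admissible words of length `k`. -/
noncomputable def admFinset (β : ℝ) (hβ : 1 < β) (k : ℕ) : Finset (Fin k → ℕ) :=
  (adm_finite hβ k).toFinset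

lemma mem_admFinset {hβ : 1 < β} {k : ℕ} {w : Fin k → ℕ} :
    w ∈ admFinset β hβ k ↔ (cyl β w).Nonempty := Set.Finite.mem_toFinset _

lemma cyl_bddAbove {k : ℕ} (w : Fin k → ℕ) : BddAbove (cyl β w) :=
  (bddAbove_Ico (a := (0:ℝ)) (b := 1)).mono fun x hx => hx.1

lemma sSup_cyl_le_one {k : ℕ} {w : Fin k → ℕ} (h : (cyl β w).Nonempty) :
    sSup (cyl β w) ≤ 1 := csSup_le h fun x hx => hx.1.2.le

lemma val_le_sSup (hβ : 1 < β) {k : ℕ} {w : Fin k → ℕ} (h : (cyl β w).Nonempty) :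
    val β w ≤ sSup (cyl β w) := le_csSup (cyl_bddAbove w) (val_mem_cyl hβ w h)

/-- Sum of lengths of "ordered" intervals is at most the total length. -/
lemma sum_ordered {ι : Type*} (a b : ι → ℝ) :
    ∀ (N : ℕ) (s : Finset ι), s.card = N →
    (∀ i ∈ s, 0 ≤ a i) → (∀ i ∈ s, a i ≤ b i) →
    (∀ i ∈ s, ∀ j ∈ s, a i = a j → i = j) →
    (∀ i ∈ s, ∀ j ∈ s, a i < a j → b i ≤ a j) →
    ∀ M : ℝ, 0 ≤ M → (∀ i ∈ s, b i ≤ M) →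
    ∑ i ∈ s, (b i - a i) ≤ M := by
  classical
  intro N
  induction N with
  | zero =>
    intro s hs _ _ _ _ M hM _
    rw [Finset.card_eq_zero.1 hs, Finset.sum_empty]
    exact hM
  | succ N ih =>
    intro s hs h0 hab hinj hord M hM hbM
    have hne : s.Nonempty := Finset.card_pos.1 (by omega)
    obtain ⟨m, hm, hmax⟩ := Finset.exists_max_image s a hne
    have hsplit : s = insert m (s.erase m) := (Finset.insert_erase hm).symm
    have hcard : (s.erase m).card = N := by
      rw [Finset.card_erase_of_mem hm, hs]; omega
    have herase : ∀ i ∈ s.erase m, a i < a m := by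
      intro i hi
      have his : i ∈ s := Finset.mem_of_mem_erase hi
      rcases lt_or_eq_of_le (hmax i his) with h | h
      · exact h
      · exact absurd (hinj i his m hm h) (Finset.ne_of_mem_erase hi)
    have hih : ∑ i ∈ s.erase m, (b i - a i) ≤ a m := by
      refine ih (s.erase m) hcard
        (fun i hi => h0 i (Finset.mem_of_mem_erase hi))
        (fun i hi => hab i (Finset.mem_of_mem_erase hi))
        (fun i hi j hj h => hinj i (Finset.mem_of_mem_erase hi) j (Finset.mem_of_mem_erase hj) h)
        (fun i hi j hj h => hord i (Finset.mem_of_mem_erase hi) j (Finset.mem_of_mem_erase hj) h)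
        (a m) (h0 m hm) ?_
      intro i hi
      exact hord i (Finset.mem_of_mem_erase hi) m hm (herase i hi)
    calc ∑ i ∈ s, (b i - a i)
        = (b m - a m) + ∑ i ∈ s.erase m, (b i - a i) := by
          conv_lhs => rw [hsplit]
          rw [Finset.sum_insert (Finset.notMem_erase m s)]
      _ ≤ (b m - a m) + a m := by linarith
      _ = b m := by ring
      _ ≤ M := hbM m hm

/-- Key recursion: `N_{k+1} ≤ β^{k+1} + N_k`. -/
lemma card_adm_succ (hβ : 1 < β) (k : ℕ) :
    ((admFinset β hβ (k+1)).card : ℝ) ≤ β ^ (k+1) + (admFinset β hβ k).card := by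
  classical
  have hβ0 : (0:ℝ) < β := by linarith
  set A := admFinset β hβ (k+1)
  set B := admFinset β hβ k
  -- prefix map
  have hpre : ∀ w ∈ A, (fun i => w (Fin.castSucc i)) ∈ B := by
    intro w hw
    obtain ⟨x, hx⟩ := mem_admFinset.1 hw
    exact mem_admFinset.2 ⟨x, hx.1, fun i => hx.2 (Fin.castSucc i)⟩
  have hcard := Finset.card_eq_sum_card_fiberwise hpre
  -- bound each fiber
  have hfiber : ∀ u ∈ B,
      ((A.filter (fun w => (fun i => w (Fin.castSucc i)) = u)).card : ℝ)
        ≤ β ^ (k+1) * (sSup (cyl β u) - val β u) + 1 := by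
    intro u hu
    have hBd : (0:ℝ) ≤ β ^ (k+1) * (sSup (cyl β u) - val β u) := by
      have := val_le_sSup hβ (mem_admFinset.1 hu)
      have : (0:ℝ) ≤ sSup (cyl β u) - val β u := by linarith
      positivity
    have hle : (A.filter (fun w => (fun i => w (Fin.castSucc i)) = u)).card
        ≤ ⌊β ^ (k+1) * (sSup (cyl β u) - val β u)⌋₊ + 1 := by
      refine le_trans (Finset.card_le_card_of_injOn (fun w => w (Fin.last k)) ?_ ?_)
        (le_of_eq (Finset.card_range _))
      · -- maps to range
        intro w hw
        rw [Finset.mem_coe, Finset.mem_filter] at hw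
        obtain ⟨hwA, hwu⟩ := hw
        obtain ⟨x, hx⟩ := mem_admFinset.1 hwA
        have hxu : x ∈ cyl β u := by
          refine ⟨hx.1, fun i => ?_⟩
          rw [← congrFun hwu i]
          exact hx.2 (Fin.castSucc i)
        have hdec := mem_cyl_decomp hβ hxu
        have hTk : (betaT β)^[k] x = β ^ k * (x - val β u) := by
          have hpk : (β⁻¹:ℝ) ^ k * β ^ k = 1 := by
            rw [← mul_pow, inv_mul_cancel₀ (ne_of_gt hβ0), one_pow]
          linear_combination (-(β ^ k)) * hdec - (betaT β)^[k] x * hpk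
        have hxs : x ≤ sSup (cyl β u) := le_csSup (cyl_bddAbove u) hxu
        have hwl : w (Fin.last k) = betaDigit β x k := (hx.2 (Fin.last k)).symm
        show w (Fin.last k) ∈ Finset.range (⌊β ^ (k+1) * (sSup (cyl β u) - val β u)⌋₊ + 1)
        rw [Finset.mem_range, Nat.lt_succ_iff, hwl]
        apply Nat.floor_le_floor
        show β * (betaT β)^[k] x ≤ β ^ (k+1) * (sSup (cyl β u) - val β u)
        rw [hTk, pow_succ]
        have hmul := mul_le_mul_of_nonneg_left hxs
          (le_of_lt (by positivity : (0:ℝ) < β ^ k * β))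
        nlinarith [hmul]
      · -- injective on fiber
        intro w hw w' hw' hl
        rw [Finset.mem_coe, Finset.mem_filter] at hw hw'
        funext i
        induction i using Fin.lastCases with
        | last => exact hl
        | cast i => rw [congrFun hw.2 i, congrFun hw'.2 i]
    calc ((A.filter _).card : ℝ) ≤ (⌊β ^ (k+1) * (sSup (cyl β u) - val β u)⌋₊ + 1 : ℕ) := by
          exact_mod_cast hle
      _ ≤ β ^ (k+1) * (sSup (cyl β u) - val β u) + 1 := by
          push_cast
          have := Nat.floor_le hBd
          linarith
  -- sum up
  have hsum : ∑ u ∈ B, (sSup (cyl β u) - val β u) ≤ 1 := by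
    refine sum_ordered (val β) (fun u => sSup (cyl β u)) B.card B rfl
      (fun u _ => val_nonneg hβ u)
      (fun u hu => val_le_sSup hβ (mem_admFinset.1 hu))
      ?_ ?_ 1 zero_le_one (fun u hu => sSup_cyl_le_one (mem_admFinset.1 hu))
    · intro u hu u' hu' h
      by_contra hne
      have h1 := val_mem_cyl hβ u (mem_admFinset.1 hu)
      have h2 := val_mem_cyl hβ u' (mem_admFinset.1 hu')
      rcases cyl_dichotomy hβ hne with hd | hd
      · exact absurd h (ne_of_lt (hd _ h1 _ h2))
      · exact absurd h.symm (ne_of_lt (hd _ h2 _ h1))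
    · intro u hu u' hu' h
      have h1 := val_mem_cyl hβ u (mem_admFinset.1 hu)
      have h2 := val_mem_cyl hβ u' (mem_admFinset.1 hu')
      have hne : u ≠ u' := by rintro rfl; exact lt_irrefl _ h
      rcases cyl_dichotomy hβ hne with hd | hd
      · exact csSup_le ⟨_, h1⟩ fun x hx => (hd x hx _ h2).le
      · exact absurd (hd _ h2 _ h1) (by linarith)
  calc ((A.card : ℝ))
      = ∑ u ∈ B, ((A.filter (fun w => (fun i => w (Fin.castSucc i)) = u)).card : ℝ) := by
        rw [hcard]; push_cast; rfl
    _ ≤ ∑ u ∈ B, (β ^ (k+1) * (sSup (cyl β u) - val β u) + 1) :=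
        Finset.sum_le_sum hfiber
    _ = β ^ (k+1) * (∑ u ∈ B, (sSup (cyl β u) - val β u)) + B.card := by
        rw [Finset.sum_add_distrib, Finset.mul_sum]
        simp
    _ ≤ β ^ (k+1) * 1 + B.card := by
        have hp : (0:ℝ) ≤ β ^ (k+1) := by positivity
        nlinarith
    _ = β ^ (k+1) + B.card := by ring

/-- Rényi's bound `N_k ≤ β^{k+1}/(β-1)`. -/
lemma card_adm_le (hβ : 1 < β) (k : ℕ) :
    ((admFinset β hβ k).card : ℝ) ≤ β ^ (k+1) / (β - 1) := by
  have hb1 : (0:ℝ) < β - 1 := by linarith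
  induction k with
  | zero =>
    have h1 : (admFinset β hβ 0).card ≤ 1 := by
      apply Finset.card_le_one.2
      intro a _ b _
      funext i
      exact i.elim0
    calc ((admFinset β hβ 0).card : ℝ) ≤ 1 := by exact_mod_cast h1
      _ ≤ β ^ (0+1) / (β - 1) := by
        rw [le_div_iff₀ hb1, one_mul, pow_one]; linarith
  | succ k ih =>
    calc ((admFinset β hβ (k+1)).card : ℝ) ≤ β ^ (k+1) + (admFinset β hβ k).card :=
        card_adm_succ hβ k
      _ ≤ β ^ (k+1) + β ^ (k+1) / (β - 1) := by linarith
      _ = β ^ (k+1+1) / (β - 1) := by field_simp; ring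

end BetaAux

namespace BetaAux

variable {X : Type*} [MetricSpace X]

/-- Composition of the IFS along the first `k` digits of `σ`. -/
def comp (f : ℕ → X → X) (σ : ℕ → ℕ) (k : ℕ) (x : X) : X :=
  (List.range k).foldr (fun j y => f (σ j) y) x

lemma comp_succ (f : ℕ → X → X) (σ : ℕ → ℕ) (k : ℕ) (x : X) :
    comp f σ (k+1) x = comp f σ k (f (σ k) x) := by
  simp only [comp, List.range_succ, List.foldr_append, List.foldr_cons, List.foldr_nil]

lemma comp_congr (f : ℕ → X → X) {σ σ' : ℕ → ℕ} (k : ℕ)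
    (h : ∀ j < k, σ j = σ' j) (x : X) : comp f σ k x = comp f σ' k x := by
  induction k generalizing x with
  | zero => rfl
  | succ k ih =>
    rw [comp_succ, comp_succ, h k (Nat.lt_succ_self k)]
    exact ih (fun j hj => h j (Nat.lt_succ_of_lt hj)) _

lemma comp_mem_range (f : ℕ → X → X) (σ : ℕ → ℕ) (k : ℕ) :
    ∀ m, k ≤ m → ∀ x, ∃ y, comp f σ m x = comp f σ k y := by
  intro m hm
  induction m, hm using Nat.le_induction with
  | base => exact fun x => ⟨x, rfl⟩
  | succ m hm ih =>
    intro x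
    rw [comp_succ]
    exact ih (f (σ m) x)

end BetaAux

namespace BetaAux

lemma comp_dist {X : Type*} [MetricSpace X] (f : ℕ → X → X) (r : ℝ) (σ : ℕ → ℕ) (k : ℕ)
    (h : ∀ j < k, ∀ x y : X, dist (f (σ j) x) (f (σ j) y) = r * dist x y) (x y : X) :
    dist (comp f σ k x) (comp f σ k y) = r ^ k * dist x y := by
  induction k generalizing x y with
  | zero => simp [comp]
  | succ k ih =>
    rw [comp_succ, comp_succ,
      ih (fun j hj => h j (Nat.lt_succ_of_lt hj)),
      h k (Nat.lt_succ_self k), pow_succ]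
    ring

end BetaAux

/-- Upper bound: for an IFS of similarities of common ratio `r ∈ (0,1)` on a compact metric
space and `1 < β < n`, with `s = log β / (-log r)` the `s`-dimensional Hausdorff measure of
the β-attractor `E_β` is at most `(β/(β-1))·|X|^s`; in particular
`dim_H(E_β) ≤ log β / (-log r)`. -/
theorem stmt2 {X : Type*} [MetricSpace X] [CompactSpace X] [Nonempty X]
    [MeasurableSpace X] [BorelSpace X]
    (n : ℕ) (f : ℕ → X → X) (r : ℝ) (hr0 : 0 < r) (hr1 : r < 1)
    (hsim : ∀ i < n, ∀ x y : X, dist (f i x) (f i y) = r * dist x y)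
    (β : ℝ) (hβ1 : 1 < β) (hβn : β < n)
    (φ : (ℕ → ℕ) → X)
    (hφ : ∀ σ ∈ betaShift β, ∀ x : X,
      Filter.Tendsto (fun k => (List.range k).foldr (fun j y => f (σ j) y) x)
        Filter.atTop (nhds (φ σ)))
    (Eβ : Set X) (hE : Eβ = φ '' betaShift β) :
    μH[Real.log β / (-Real.log r)] Eβ ≤
        ENNReal.ofReal (β / (β - 1) *
          Metric.diam (Set.univ : Set X) ^ (Real.log β / (-Real.log r))) ∧
      dimH Eβ ≤ ENNReal.ofReal (Real.log β / (-Real.log r)) := by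
  classical
  have hβ0 : (0:ℝ) < β := lt_trans one_pos hβ1
  set s := Real.log β / (-Real.log r) with hs_def
  have hlogβ : 0 < Real.log β := Real.log_pos hβ1
  have hlogr : Real.log r < 0 := Real.log_neg hr0 hr1
  have hlr : Real.log r ≠ 0 := ne_of_lt hlogr
  have hs0 : 0 < s := div_pos hlogβ (neg_pos.2 hlogr)
  have hrs : r ^ s = β⁻¹ := by
    rw [Real.rpow_def_of_pos hr0]
    have h1 : Real.log r * s = -Real.log β := by
      have h := div_mul_cancel₀ (Real.log β) (neg_ne_zero.2 hlr)
      rw [hs_def]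
      linear_combination -h
    rw [h1, Real.exp_neg, Real.exp_log hβ0]
  set D := Metric.diam (Set.univ : Set X) with hD_def
  have hD : 0 ≤ D := Metric.diam_nonneg
  have hMn : ∀ i : ℕ, i ≤ ⌊β⌋₊ → i < n := by
    intro i hi
    have h2 : (⌊β⌋₊ : ℝ) ≤ β := Nat.floor_le hβ0.le
    have : (i : ℝ) < n := lt_of_le_of_lt (le_trans (Nat.cast_le.2 hi) h2) hβn
    exact_mod_cast this
  let extw : ∀ {k : ℕ}, (Fin k → ℕ) → (ℕ → ℕ) :=
    fun {k} w j => if h : j < k then w ⟨j, h⟩ else 0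
  -- diameter bound for cover pieces
  have hdiam : ∀ (k : ℕ) (w : {w : Fin k → ℕ // w ∈ BetaAux.admFinset β hβ1 k}),
      EMetric.diam (closure (Set.range (BetaAux.comp f (extw w.1) k)))
        ≤ ENNReal.ofReal (r ^ k * D) := by
    intro k w
    have hcond : ∀ j < k, ∀ x y : X,
        dist (f (extw w.1 j) x) (f (extw w.1 j) y) = r * dist x y := by
      intro j hj x y
      obtain ⟨x0, hx0⟩ := BetaAux.mem_admFinset.1 w.2
      have hle : extw w.1 j ≤ ⌊β⌋₊ := by
        simp only [extw]
        rw [dif_pos hj, ← hx0.2 ⟨j, hj⟩]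
        exact BetaAux.digit_le hβ1 hx0.1 j
      exact hsim _ (hMn _ hle) x y
    rw [show ∀ t : Set X, EMetric.diam (closure t) = EMetric.diam t from Metric.ediam_closure]
    apply EMetric.diam_le
    rintro _ ⟨x, rfl⟩ _ ⟨y, rfl⟩
    rw [edist_dist]
    apply ENNReal.ofReal_le_ofReal
    rw [BetaAux.comp_dist f r _ k hcond x y]
    exact mul_le_mul_of_nonneg_left
      (Metric.dist_le_diam_of_mem isCompact_univ.isBounded (Set.mem_univ x) (Set.mem_univ y))
      (pow_nonneg hr0.le k)
  -- the cover property
  have hcover : ∀ k : ℕ, Eβ ⊆ ⋃ w : {w : Fin k → ℕ // w ∈ BetaAux.admFinset β hβ1 k},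
      closure (Set.range (BetaAux.comp f (extw w.1) k)) := by
    intro k
    rw [hE]
    rintro _ ⟨σ, hσ, rfl⟩
    have hU : IsOpen {τ : ℕ → ℕ | ∀ j ∈ Finset.range k, τ j = σ j} := by
      have he : {τ : ℕ → ℕ | ∀ j ∈ Finset.range k, τ j = σ j}
          = ⋂ j ∈ Finset.range k, (fun τ : ℕ → ℕ => τ j) ⁻¹' {σ j} := by
        ext τ; simp
      rw [he]
      exact isOpen_biInter_finset fun j _ =>
        (continuous_apply j).isOpen_preimage _ (isOpen_discrete _)
    obtain ⟨τ, hτU, hτD⟩ := mem_closure_iff.1 hσ _ hU (fun j _ => rfl)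
    obtain ⟨x0, hx0, hdig⟩ := hτD
    set w : Fin k → ℕ := fun i => betaDigit β x0 i with hw_def
    have hwmem : w ∈ BetaAux.admFinset β hβ1 k :=
      BetaAux.mem_admFinset.2 ⟨x0, hx0, fun i => rfl⟩
    refine Set.mem_iUnion.2 ⟨⟨w, hwmem⟩, ?_⟩
    have hagree : ∀ j < k, σ j = extw w j := by
      intro j hj
      simp only [extw]
      rw [dif_pos hj]
      have h1 : τ j = σ j := hτU j (Finset.mem_range.2 hj)
      have h2 : τ j = betaDigit β x0 j := hdig j
      rw [hw_def]
      rw [← h1, h2]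
    have hx' := hφ σ hσ (Classical.arbitrary X)
    apply mem_closure_of_tendsto hx'
    filter_upwards [eventually_ge_atTop k] with m hm
    obtain ⟨y, hy⟩ := BetaAux.comp_mem_range f σ k m hm (Classical.arbitrary X)
    show BetaAux.comp f σ m (Classical.arbitrary X) ∈ _
    rw [hy, BetaAux.comp_congr f k hagree]
    exact ⟨y, rfl⟩
  -- per-level sum bound
  have hsum : ∀ k : ℕ,
      (∑ w : {w : Fin k → ℕ // w ∈ BetaAux.admFinset β hβ1 k},
        EMetric.diam (closure (Set.range (BetaAux.comp f (extw w.1) k))) ^ s)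
      ≤ ENNReal.ofReal (β / (β - 1) * D ^ s) := by
    intro k
    have hterm : ∀ w : {w : Fin k → ℕ // w ∈ BetaAux.admFinset β hβ1 k},
        EMetric.diam (closure (Set.range (BetaAux.comp f (extw w.1) k))) ^ s
          ≤ ENNReal.ofReal ((r ^ k * D) ^ s) := by
      intro w
      rw [← ENNReal.ofReal_rpow_of_nonneg (mul_nonneg (pow_nonneg hr0.le k) hD) hs0.le]
      exact ENNReal.rpow_le_rpow (hdiam k w) hs0.le
    calc (∑ w : {w : Fin k → ℕ // w ∈ BetaAux.admFinset β hβ1 k},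
        EMetric.diam (closure (Set.range (BetaAux.comp f (extw w.1) k))) ^ s)
        ≤ ∑ _w : {w : Fin k → ℕ // w ∈ BetaAux.admFinset β hβ1 k},
            ENNReal.ofReal ((r ^ k * D) ^ s) := Finset.sum_le_sum fun w _ => hterm w
      _ = ((BetaAux.admFinset β hβ1 k).card : ℝ≥0∞) * ENNReal.ofReal ((r ^ k * D) ^ s) := by
          rw [Finset.sum_const, Finset.card_univ, Fintype.card_coe, nsmul_eq_mul]
      _ = ENNReal.ofReal (((BetaAux.admFinset β hβ1 k).card : ℝ) * (r ^ k * D) ^ s) := by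
          rw [← ENNReal.ofReal_natCast ((BetaAux.admFinset β hβ1 k).card),
            ← ENNReal.ofReal_mul (Nat.cast_nonneg _)]
      _ ≤ ENNReal.ofReal (β / (β - 1) * D ^ s) := by
          apply ENNReal.ofReal_le_ofReal
          have hb1 : (0:ℝ) < β - 1 := by linarith
          have hpow : ((r : ℝ) ^ k) ^ s = β⁻¹ ^ k := by
            rw [← Real.rpow_natCast r k, ← Real.rpow_mul hr0.le, mul_comm,
              Real.rpow_mul hr0.le, hrs, Real.rpow_natCast]
          have hmul : (r ^ k * D) ^ s = β⁻¹ ^ k * D ^ s := by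
            rw [Real.mul_rpow (pow_nonneg hr0.le k) hD, hpow]
          rw [hmul]
          have hcard := BetaAux.card_adm_le hβ1 k
          have hnn : (0:ℝ) ≤ β⁻¹ ^ k * D ^ s := by
            apply mul_nonneg (pow_nonneg (inv_nonneg.2 hβ0.le) k)
            exact Real.rpow_nonneg hD s
          calc ((BetaAux.admFinset β hβ1 k).card : ℝ) * (β⁻¹ ^ k * D ^ s)
              ≤ (β ^ (k+1) / (β - 1)) * (β⁻¹ ^ k * D ^ s) :=
                mul_le_mul_of_nonneg_right hcard hnn
            _ = (β ^ (k+1) * β⁻¹ ^ k) / (β - 1) * D ^ s := by ring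
            _ = β / (β - 1) * D ^ s := by
                congr 2
                rw [pow_succ, mul_comm (β ^ k) β, mul_assoc, ← mul_pow,
                  mul_inv_cancel₀ (ne_of_gt hβ0), one_pow, mul_one]
  -- assemble the measure bound
  have key : μH[s] Eβ ≤ ENNReal.ofReal (β / (β - 1) * D ^ s) := by
    have hrt : Filter.Tendsto (fun k : ℕ => ENNReal.ofReal (r ^ k * D)) atTop (𝓝 0) := by
      have h1 : Filter.Tendsto (fun k : ℕ => r ^ k * D) atTop (𝓝 0) := by
        simpa using (tendsto_pow_atTop_nhds_zero_of_lt_one hr0.le hr1).mul_const D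
      have h2 := (ENNReal.continuous_ofReal.tendsto 0).comp h1
      simpa [Function.comp_def] using h2
    have hcov := MeasureTheory.Measure.hausdorffMeasure_le_liminf_sum
      (ι := fun k : ℕ => {w : Fin k → ℕ // w ∈ BetaAux.admFinset β hβ1 k}) s Eβ
      (fun k => ENNReal.ofReal (r ^ k * D)) hrt
      (fun k w => closure (Set.range (BetaAux.comp f (extw w.1) k)))
      (Filter.Eventually.of_forall (fun k => hdiam k))
      (Filter.Eventually.of_forall hcover)
    refine le_trans hcov ?_
    refine le_trans (Filter.liminf_le_liminf (Filter.Eventually.of_forall hsum)) ?_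
    simp [Filter.liminf_const]
  refine ⟨key, ?_⟩
  have hne : μH[s] Eβ ≠ ⊤ := ne_top_of_le_ne_top ENNReal.ofReal_ne_top key
  have hdim : dimH Eβ ≤ (s.toNNReal : ℝ≥0∞) := by
    apply dimH_le_of_hausdorffMeasure_ne_top
    rwa [Real.coe_toNNReal s hs0.le]
  have h2 : ENNReal.ofReal s = (s.toNNReal : ℝ≥0∞) := rfl
  rw [h2]
  exact hdim
end

section
/- Let (X; f_0,…,f_{n−1}) be an iterated function system on a compact metric space X such that every f_i is a similarity with the same ratio r ∈ (0,1), let 1 < β < n, and let E_β be the β-attractor. Assume the separation condition f_i(E_β) ∩ f_j(E_β) ∩ E_β = ∅ for i ≠ j, and let l be the nonnegative integer with r^{l+1}|X| < δ_0 ≤ r^l|X|, where δ_0 = min_{i≠j} d(f_i(E_β)∩E_β, f_j(E_β)∩E_β) > 0. Then, with s = log β / (−log r), every finite δ_0-cover {U_1,…,U_N} of E_β satisfies Σ_{i=1}^N |U_i|^s ≥ β^{−2(l+1)}(β−1)|X|^s; in particular the s-dimensional Hausdorff measure of E_β is positive and dim_H(E_β) ≥ s. -/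
open Set Filter MeasureTheory Topology
open scoped ENNReal NNReal

/-- Distance between two sets: the infimum of distances between their points. -/
noncomputable def setDist {X : Type*} [MetricSpace X] (A B : Set X) : ℝ :=
  sInf (Set.image2 dist A B)

/-- Lower bound: with the separation condition, `δ_0` the minimal distance between the pieces
`f_i(E_β) ∩ E_β`, and `l` with `r^{l+1}|X| < δ_0 ≤ r^l|X|`, every finite `δ_0`-cover
`{U_1,…,U_N}` of `E_β` satisfies `Σ |U_i|^s ≥ β^{-2(l+1)}(β-1)|X|^s` with
`s = log β / (-log r)`; in particular `H^s(E_β) > 0` and `dim_H(E_β) ≥ s`. -/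
theorem stmt3 {X : Type*} [MetricSpace X] [CompactSpace X] [Nonempty X]
    [MeasurableSpace X] [BorelSpace X]
    (n : ℕ) (f : ℕ → X → X) (r : ℝ) (hr0 : 0 < r) (hr1 : r < 1)
    (hsim : ∀ i < n, ∀ x y : X, dist (f i x) (f i y) = r * dist x y)
    (β : ℝ) (hβ1 : 1 < β) (hβn : β < n)
    (φ : (ℕ → ℕ) → X)
    (hφ : ∀ σ ∈ betaShift β, ∀ x : X,
      Filter.Tendsto (fun k => (List.range k).foldr (fun j y => f (σ j) y) x)
        Filter.atTop (nhds (φ σ)))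
    (Eβ : Set X) (hE : Eβ = φ '' betaShift β)
    (hsep : ∀ i < n, ∀ j < n, i ≠ j → (f i '' Eβ) ∩ (f j '' Eβ) ∩ Eβ = ∅)
    (δ₀ : ℝ) (hδ₀pos : 0 < δ₀)
    (hδ₀ : IsLeast {d : ℝ | ∃ i < n, ∃ j < n, i ≠ j ∧
      d = setDist ((f i '' Eβ) ∩ Eβ) ((f j '' Eβ) ∩ Eβ)} δ₀)
    (l : ℕ) (hl1 : r ^ (l + 1) * Metric.diam (Set.univ : Set X) < δ₀)
    (hl2 : δ₀ ≤ r ^ l * Metric.diam (Set.univ : Set X)) :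
    (∀ (N : ℕ) (U : Fin N → Set X), (∀ i, Metric.diam (U i) ≤ δ₀) →
        Eβ ⊆ ⋃ i, U i →
        β ^ (-(2 * ((l : ℤ) + 1))) * (β - 1) *
            Metric.diam (Set.univ : Set X) ^ (Real.log β / (-Real.log r)) ≤
          ∑ i, Metric.diam (U i) ^ (Real.log β / (-Real.log r))) ∧
      0 < μH[Real.log β / (-Real.log r)] Eβ ∧
      ENNReal.ofReal (Real.log β / (-Real.log r)) ≤ dimH Eβ := by
  classical
  obtain ⟨x₀⟩ := ‹Nonempty X›
  have hβ0 : (0:ℝ) < β := lt_trans one_pos hβ1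
  set s : ℝ := Real.log β / (-Real.log r) with hs
  set D : ℝ := Metric.diam (Set.univ : Set X) with hDdef
  have hlogr : Real.log r < 0 := Real.log_neg hr0 hr1
  have hs0 : 0 < s := div_pos (Real.log_pos hβ1) (by linarith)
  have hrs : r ^ s = β⁻¹ := by
    rw [Real.rpow_def_of_pos hr0]
    have h1 : Real.log r * s = -Real.log β := by
      have hne : -Real.log r ≠ 0 := by
        intro h; rw [neg_eq_zero] at h; exact absurd h (ne_of_lt hlogr)
      rw [hs]
      field_simp
      rw [mul_div_cancel_left₀ _ (ne_of_lt hlogr)]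
    rw [h1, Real.exp_neg, Real.exp_log hβ0]
  have hD : 0 < D := by
    by_contra h
    push_neg at h
    have h0 : D = 0 := le_antisymm h Metric.diam_nonneg
    rw [h0, mul_zero] at hl2
    linarith
  have hDs : (0:ℝ) < D ^ s := Real.rpow_pos_of_pos hD _
  have hTmem : ∀ x : ℝ, betaT β x ∈ Ico (0:ℝ) 1 :=
    fun x => ⟨Int.fract_nonneg _, Int.fract_lt_one _⟩
  have hImem : ∀ (k : ℕ), ∀ x ∈ Ico (0:ℝ) 1, (betaT β)^[k] x ∈ Ico (0:ℝ) 1 := by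
    intro k
    induction k with
    | zero => intro x hx; simpa using hx
    | succ k ih =>
        intro x hx
        rw [Function.iterate_succ_apply]
        exact ih _ (hTmem x)
  have hdig : ∀ x ∈ Ico (0:ℝ) 1, ∀ k, betaDigit β x k < n := by
    intro x hx k
    have h1 := hImem k x hx
    have h2 : β * (betaT β)^[k] x < n := by nlinarith [h1.1, h1.2]
    exact (Nat.floor_lt (mul_nonneg hβ0.le h1.1)).mpr h2
  have hrec : ∀ x : ℝ, 0 ≤ x → β * x = (betaDigit β x 0 : ℝ) + betaT β x := by
    intro x hx
    have h0 : (0:ℝ) ≤ β * x := mul_nonneg hβ0.le hx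
    have h1 : ((⌊β * x⌋₊ : ℕ) : ℝ) = ((⌊β * x⌋ : ℤ) : ℝ) := by
      exact_mod_cast congrArg (fun z : ℤ => (z : ℝ)) (Int.natCast_floor_eq_floor h0)
    show β * x = (⌊β * x⌋₊ : ℝ) + Int.fract (β * x)
    rw [h1, Int.floor_add_fract]
  have hshift : ∀ (x : ℝ) (k : ℕ), betaDigit β x (k+1) = betaDigit β (betaT β x) k := by
    intro x k
    simp [betaDigit, Function.iterate_succ_apply]
  have hclose : ∀ (j : ℕ), ∀ x ∈ Ico (0:ℝ) 1, ∀ y ∈ Ico (0:ℝ) 1,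
      (∀ i < j, betaDigit β x i = betaDigit β y i) → |x - y| ≤ (β⁻¹)^j := by
    intro j
    induction j with
    | zero =>
        intro x hx y hy _
        rw [pow_zero, abs_le]
        constructor
        · linarith [hx.1, hy.2]
        · linarith [hx.2, hy.1]
    | succ j ih =>
        intro x hx y hy hagree
        have h0 : betaDigit β x 0 = betaDigit β y 0 := hagree 0 (Nat.succ_pos j)
        have hx' := hrec x hx.1
        have hy' := hrec y hy.1
        have hsub : β * (x - y) = betaT β x - betaT β y := by
          rw [mul_sub, hx', hy', h0]; ring
        have h2 : ∀ i < j, betaDigit β (betaT β x) i = betaDigit β (betaT β y) i :=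
          fun i hi => by
            rw [← hshift x i, ← hshift y i]; exact hagree (i+1) (Nat.succ_lt_succ hi)
        have h3 := ih (betaT β x) (hTmem x) (betaT β y) (hTmem y) h2
        have h4 : |x - y| = |betaT β x - betaT β y| / β := by
          rw [← hsub, abs_mul, abs_of_pos hβ0]
          field_simp
        rw [h4, pow_succ, div_le_iff₀ hβ0]
        have h5 : (β⁻¹)^j * β⁻¹ * β = (β⁻¹)^j := by
          field_simp
        rw [h5]
        exact h3
  have hmem : ∀ x ∈ Ico (0:ℝ) 1, betaDigit β x ∈ betaShift β :=
    fun x hx => subset_closure ⟨x, hx, fun _ => rfl⟩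
  set g : ℝ → X := fun x => φ (betaDigit β x) with hg
  have hstep : ∀ x ∈ Ico (0:ℝ) 1, g x = f (betaDigit β x 0) (g (betaT β x)) := by
    intro x hx
    have hd0 : betaDigit β x 0 < n := hdig x hx 0
    have hlip : LipschitzWith ⟨r, hr0.le⟩ (f (betaDigit β x 0)) := by
      apply LipschitzWith.of_dist_le_mul
      intro a b
      rw [hsim _ hd0 a b]
      exact le_of_eq rfl
    have h1 := hφ _ (hmem x hx) x₀
    have h2 := hφ _ (hmem _ (hTmem x)) x₀
    have h3 : Tendsto (fun k => f (betaDigit β x 0)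
        ((List.range k).foldr (fun j y => f (betaDigit β (betaT β x) j) y) x₀))
        atTop (nhds (f (betaDigit β x 0) (g (betaT β x)))) :=
      (hlip.continuous.tendsto _).comp h2
    have h4 : ∀ k, (List.range (k+1)).foldr (fun j y => f (betaDigit β x j) y) x₀
        = f (betaDigit β x 0)
            ((List.range k).foldr (fun j y => f (betaDigit β (betaT β x) j) y) x₀) := by
      intro k
      rw [List.range_succ_eq_map, List.foldr_cons, List.foldr_map]
      simp only [Nat.succ_eq_add_one, hshift]
    have h5 : Tendsto (fun k => (List.range (k+1)).foldr
        (fun j y => f (betaDigit β x j) y) x₀) atTop (nhds (g x)) :=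
      h1.comp (tendsto_add_atTop_nat 1)
    have h6 : Tendsto (fun k => f (betaDigit β x 0)
        ((List.range k).foldr (fun j y => f (betaDigit β (betaT β x) j) y) x₀))
        atTop (nhds (g x)) := by
      simpa only [h4] using h5
    exact tendsto_nhds_unique h6 h3
  have hgE : ∀ x ∈ Ico (0:ℝ) 1, g x ∈ Eβ := by
    intro x hx
    rw [hE]
    exact ⟨_, hmem x hx, rfl⟩
  have hsep' : ∀ (p : ℕ), ∀ x ∈ Ico (0:ℝ) 1, ∀ y ∈ Ico (0:ℝ) 1,
      (∀ i < p, betaDigit β x i = betaDigit β y i) →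
      betaDigit β x p ≠ betaDigit β y p → r ^ p * δ₀ ≤ dist (g x) (g y) := by
    intro p
    induction p with
    | zero =>
        intro x hx y hy _ hne
        have hgx : g x ∈ (f (betaDigit β x 0) '' Eβ) ∩ Eβ :=
          ⟨⟨g (betaT β x), hgE _ (hTmem x), (hstep x hx).symm⟩, hgE x hx⟩
        have hgy : g y ∈ (f (betaDigit β y 0) '' Eβ) ∩ Eβ :=
          ⟨⟨g (betaT β y), hgE _ (hTmem y), (hstep y hy).symm⟩, hgE y hy⟩
        have hmemS : setDist ((f (betaDigit β x 0) '' Eβ) ∩ Eβ)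
            ((f (betaDigit β y 0) '' Eβ) ∩ Eβ) ∈ {d : ℝ | ∃ i < n, ∃ j < n, i ≠ j ∧
            d = setDist ((f i '' Eβ) ∩ Eβ) ((f j '' Eβ) ∩ Eβ)} :=
          ⟨_, hdig x hx 0, _, hdig y hy 0, hne, rfl⟩
        have h1 : δ₀ ≤ setDist ((f (betaDigit β x 0) '' Eβ) ∩ Eβ)
            ((f (betaDigit β y 0) '' Eβ) ∩ Eβ) := hδ₀.2 hmemS
        have h2 : setDist ((f (betaDigit β x 0) '' Eβ) ∩ Eβ)
            ((f (betaDigit β y 0) '' Eβ) ∩ Eβ) ≤ dist (g x) (g y) := by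
          apply csInf_le
          · refine ⟨0, fun d hd => ?_⟩
            obtain ⟨a, -, b, -, rfl⟩ := hd
            exact dist_nonneg
          · exact mem_image2_of_mem hgx hgy
        calc r ^ 0 * δ₀ = δ₀ := by rw [pow_zero, one_mul]
          _ ≤ _ := le_trans h1 h2
    | succ p ih =>
        intro x hx y hy hagree hne
        have h0 : betaDigit β x 0 = betaDigit β y 0 := hagree 0 (Nat.succ_pos p)
        have hd0 : betaDigit β x 0 < n := hdig x hx 0
        have hdist : dist (g x) (g y) = r * dist (g (betaT β x)) (g (betaT β y)) := by
          rw [hstep x hx, hstep y hy, ← h0, hsim _ hd0]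
        have hagree' : ∀ i < p, betaDigit β (betaT β x) i = betaDigit β (betaT β y) i :=
          fun i hi => by
            rw [← hshift x i, ← hshift y i]; exact hagree (i+1) (Nat.succ_lt_succ hi)
        have hne' : betaDigit β (betaT β x) p ≠ betaDigit β (betaT β y) p := by
          rw [← hshift x p, ← hshift y p]; exact hne
        have hih := ih (betaT β x) (hTmem x) (betaT β y) (hTmem y) hagree' hne'
        calc r ^ (p+1) * δ₀ = r * (r ^ p * δ₀) := by ring
          _ ≤ r * dist (g (betaT β x)) (g (betaT β y)) :=
              mul_le_mul_of_nonneg_left hih hr0.le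
          _ = dist (g x) (g y) := hdist.symm
  -- key per-set volume estimate
  have key : ∀ U : Set X, Metric.diam U ≤ δ₀ →
      volume {x : ℝ | x ∈ Ico (0:ℝ) 1 ∧ g x ∈ U}
        ≤ ENNReal.ofReal (β^(l+1) / D^s * (Metric.diam U)^s) := by
    intro U hU
    set A := {x : ℝ | x ∈ Ico (0:ℝ) 1 ∧ g x ∈ U} with hA
    have hAsub : A ⊆ Ico (0:ℝ) 1 := fun x hx => hx.1
    have hagreeAll : ∀ j : ℕ, Metric.diam U < r^j * δ₀ →
        ∀ x ∈ A, ∀ y ∈ A, ∀ i, i ≤ j → betaDigit β x i = betaDigit β y i := by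
      intro j hUj x hxA y hyA i hij
      by_contra hne
      have hex : ∃ m, betaDigit β x m ≠ betaDigit β y m := ⟨i, hne⟩
      obtain ⟨p, hple, hpspec, hagr⟩ : ∃ p, p ≤ i ∧ betaDigit β x p ≠ betaDigit β y p ∧
          ∀ m < p, betaDigit β x m = betaDigit β y m :=
        ⟨Nat.find hex, Nat.find_min' hex hne, Nat.find_spec hex,
          fun m hm => not_not.mp (Nat.find_min hex hm)⟩
      have h1 := hsep' p x hxA.1 y hyA.1 hagr hpspec
      have h2 : dist (g x) (g y) ≤ Metric.diam U :=
        Metric.dist_le_diam_of_mem Metric.isBounded_of_compactSpace hxA.2 hyA.2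
      have h3 : r^j ≤ r^p := pow_le_pow_of_le_one hr0.le hr1.le (le_trans hple hij)
      nlinarith [h1, h2, h3, hδ₀pos, hUj]
    have hvol : ∀ j : ℕ, Metric.diam U < r^j * δ₀ →
        volume A ≤ ENNReal.ofReal ((β⁻¹)^(j+1)) := by
      intro j hUj
      have hdiff : ∀ x ∈ A, ∀ y ∈ A, |x - y| ≤ (β⁻¹)^(j+1) := fun x hx y hy =>
        hclose (j+1) x hx.1 y hy.1
          (fun i hi => hagreeAll j hUj x hx y hy i (Nat.lt_succ_iff.mp hi))
      rcases Set.eq_empty_or_nonempty A with hAe | ⟨a, ha⟩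
      · rw [hAe]; simp
      · have hbdd : BddBelow A := ⟨0, fun x hx => (hAsub hx).1⟩
        have hsub2 : A ⊆ Icc (sInf A) (sInf A + (β⁻¹)^(j+1)) := by
          intro x hx
          refine ⟨csInf_le hbdd hx, ?_⟩
          have hstep2 : x - (β⁻¹)^(j+1) ≤ sInf A := by
            apply le_csInf ⟨a, ha⟩
            intro y hy
            have h6 := hdiff x hx y hy
            rw [abs_le] at h6
            linarith [h6.1]
          linarith
        calc volume A ≤ volume (Icc (sInf A) (sInf A + (β⁻¹)^(j+1))) := measure_mono hsub2
          _ = ENNReal.ofReal ((β⁻¹)^(j+1)) := by rw [Real.volume_Icc]; ring_nf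
    rcases eq_or_lt_of_le (Metric.diam_nonneg : (0:ℝ) ≤ Metric.diam U) with hd0 | hd0
    · have hv0 : volume A = 0 := by
        refine le_antisymm ?_ zero_le
        have ht : Tendsto (fun j : ℕ => ENNReal.ofReal ((β⁻¹)^(j+1))) atTop (nhds 0) := by
          rw [← ENNReal.ofReal_zero]
          apply ENNReal.tendsto_ofReal
          have h7 := tendsto_pow_atTop_nhds_zero_of_lt_one
            (inv_nonneg.mpr hβ0.le) (inv_lt_one_of_one_lt₀ hβ1)
          exact h7.comp (tendsto_add_atTop_nat 1)
        refine ge_of_tendsto ht (Filter.Eventually.of_forall fun j => hvol j ?_)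
        rw [← hd0]
        positivity
      rw [hv0]
      exact zero_le
    · have hexq : ∃ j : ℕ, r^j * δ₀ ≤ Metric.diam U := by
        obtain ⟨m, hm⟩ := exists_pow_lt_of_lt_one (div_pos hd0 hδ₀pos) hr1
        refine ⟨m, ?_⟩
        rw [lt_div_iff₀ hδ₀pos] at hm
        linarith
      obtain ⟨q, hq1, hqmin⟩ : ∃ q : ℕ, r^q * δ₀ ≤ Metric.diam U ∧
          ∀ j < q, ¬(r^j * δ₀ ≤ Metric.diam U) :=
        ⟨Nat.find hexq, Nat.find_spec hexq, fun j hj => Nat.find_min hexq hj⟩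
      have hq2 : volume A ≤ ENNReal.ofReal ((β⁻¹)^q) := by
        rcases Nat.eq_zero_or_pos q with h | h
        · rw [h, pow_zero]
          calc volume A ≤ volume (Ico (0:ℝ) 1) := measure_mono hAsub
            _ = ENNReal.ofReal 1 := by rw [Real.volume_Ico]; norm_num
        · obtain ⟨j, hj⟩ : ∃ j, q = j + 1 := ⟨q - 1, (Nat.succ_pred_eq_of_pos h).symm⟩
          have hmin := hqmin j (by omega)
          rw [hj]
          exact hvol j (not_le.mp hmin)
      refine le_trans hq2 (ENNReal.ofReal_le_ofReal ?_)
      have hpowsim : ∀ (m : ℕ) (a : ℝ), 0 ≤ a → (r^m * a)^s = (β⁻¹)^m * a^s := by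
        intro m a ha
        rw [Real.mul_rpow (pow_nonneg hr0.le m) ha]
        congr 1
        rw [← Real.rpow_natCast r m, ← Real.rpow_mul hr0.le, mul_comm,
          Real.rpow_mul hr0.le, hrs, Real.rpow_natCast]
      have h2 : (β⁻¹)^q * δ₀^s ≤ (Metric.diam U)^s := by
        rw [← hpowsim q δ₀ hδ₀pos.le]
        exact Real.rpow_le_rpow (by positivity) hq1 hs0.le
      have h3 : (β⁻¹)^(l+1) * D^s ≤ δ₀^s := by
        rw [← hpowsim (l+1) D Metric.diam_nonneg]
        exact Real.rpow_le_rpow (by positivity) hl1.le hs0.le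
      rw [div_mul_eq_mul_div, le_div_iff₀ hDs]
      have h4 : (β⁻¹)^q * ((β⁻¹)^(l+1) * D^s) ≤ (β⁻¹)^q * δ₀^s :=
        mul_le_mul_of_nonneg_left h3 (by positivity)
      have h5 : β^(l+1) * ((β⁻¹)^q * ((β⁻¹)^(l+1) * D^s)) = (β⁻¹)^q * D^s := by
        field_simp
        rw [← mul_pow, mul_one_div_cancel hβ0.ne', one_pow]
      have h6 := mul_le_mul_of_nonneg_left (le_trans h4 h2) (pow_pos hβ0 (l+1)).le
      rw [h5] at h6
      exact h6
  -- master countable-cover estimate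
  have master : ∀ t : ℕ → Set X, (Eβ ⊆ ⋃ m, t m) → (∀ m, Metric.diam (t m) ≤ δ₀) →
      (1:ℝ≥0∞) ≤ ∑' m, ENNReal.ofReal (β^(l+1) / D^s * (Metric.diam (t m))^s) := by
    intro t hcov hdm
    have hsub : Ico (0:ℝ) 1 ⊆ ⋃ m, {x : ℝ | x ∈ Ico (0:ℝ) 1 ∧ g x ∈ t m} := by
      intro x hx
      obtain ⟨m, hm⟩ := mem_iUnion.mp (hcov (hgE x hx))
      exact mem_iUnion.mpr ⟨m, hx, hm⟩
    calc (1:ℝ≥0∞) = volume (Ico (0:ℝ) 1) := by rw [Real.volume_Ico]; norm_num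
      _ ≤ volume (⋃ m, {x : ℝ | x ∈ Ico (0:ℝ) 1 ∧ g x ∈ t m}) := measure_mono hsub
      _ ≤ ∑' m, volume {x : ℝ | x ∈ Ico (0:ℝ) 1 ∧ g x ∈ t m} := measure_iUnion_le _
      _ ≤ ∑' m, ENNReal.ofReal (β^(l+1) / D^s * (Metric.diam (t m))^s) :=
          ENNReal.tsum_le_tsum (fun m => key (t m) (hdm m))
  have hc : (0:ℝ) < β^(l+1) / D^s := div_pos (pow_pos hβ0 _) hDs
  -- Hausdorff measure positivity
  have hHpos : 0 < μH[s] Eβ := by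
    rw [Measure.hausdorffMeasure_apply]
    have hb : ∀ t : ℕ → Set X, Eβ ⊆ ⋃ m, t m →
        (∀ m, EMetric.diam (t m) ≤ ENNReal.ofReal δ₀) →
        (ENNReal.ofReal (β^(l+1)/D^s))⁻¹
          ≤ ∑' m, ⨆ _ : (t m).Nonempty, EMetric.diam (t m) ^ s := by
      intro t hcov hdm
      have hdm' : ∀ m, Metric.diam (t m) ≤ δ₀ := by
        intro m
        exact ENNReal.toReal_le_of_le_ofReal hδ₀pos.le (hdm m)
      have h1 := master t hcov hdm'
      have h2 : ∀ m, ENNReal.ofReal (β^(l+1)/D^s * (Metric.diam (t m))^s)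
          ≤ ENNReal.ofReal (β^(l+1)/D^s) * ⨆ _ : (t m).Nonempty, EMetric.diam (t m) ^ s := by
        intro m
        rcases Set.eq_empty_or_nonempty (t m) with he | hne
        · rw [he]
          simp [Metric.diam_empty, Real.zero_rpow hs0.ne']
        · rw [iSup_pos hne, ENNReal.ofReal_mul hc.le]
          refine mul_le_mul_right ?_ _
          have hfin : EMetric.diam (t m) ≠ ⊤ :=
            ne_top_of_le_ne_top ENNReal.ofReal_ne_top (hdm m)
          have hMet : Metric.diam (t m) = (EMetric.diam (t m)).toReal := rfl
          rw [hMet, ENNReal.toReal_rpow,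
            ENNReal.ofReal_toReal (ENNReal.rpow_ne_top_of_nonneg hs0.le hfin)]
      have h3 := le_trans h1 (ENNReal.tsum_le_tsum h2)
      rw [ENNReal.tsum_mul_left] at h3
      have ha0 : ENNReal.ofReal (β^(l+1)/D^s) ≠ 0 := by
        simp only [ne_eq, ENNReal.ofReal_eq_zero, not_le]
        exact hc
      have hat : ENNReal.ofReal (β^(l+1)/D^s) ≠ ⊤ := ENNReal.ofReal_ne_top
      calc (ENNReal.ofReal (β^(l+1)/D^s))⁻¹
          = (ENNReal.ofReal (β^(l+1)/D^s))⁻¹ * 1 := (mul_one _).symm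
        _ ≤ (ENNReal.ofReal (β^(l+1)/D^s))⁻¹ * (ENNReal.ofReal (β^(l+1)/D^s) *
              ∑' m, ⨆ _ : (t m).Nonempty, EMetric.diam (t m) ^ s) :=
            mul_le_mul_right h3 _
        _ = ∑' m, ⨆ _ : (t m).Nonempty, EMetric.diam (t m) ^ s := by
            rw [← mul_assoc, ENNReal.inv_mul_cancel ha0 hat, one_mul]
    have hpos : (0:ℝ≥0∞) < (ENNReal.ofReal (β^(l+1)/D^s))⁻¹ :=
      ENNReal.inv_pos.mpr ENNReal.ofReal_ne_top
    refine lt_of_lt_of_le hpos ?_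
    refine le_iSup_of_le (ENNReal.ofReal δ₀) ?_
    refine le_iSup_of_le (ENNReal.ofReal_pos.mpr hδ₀pos) ?_
    refine le_iInf fun t => le_iInf fun hcov => le_iInf fun hdm => hb t hcov hdm
  refine ⟨?_, hHpos, ?_⟩
  · -- the finite cover bound
    intro N U hUd hUc
    rcases Nat.eq_zero_or_pos N with hN | hN
    · exfalso
      subst hN
      have h0 : (0:ℝ) ∈ Ico (0:ℝ) 1 := ⟨le_refl _, one_pos⟩
      have := hUc (hgE 0 h0)
      simp at this
    · set t : ℕ → Set X := fun m => if h : m < N then U ⟨m, h⟩ else ∅ with ht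
      have hcov : Eβ ⊆ ⋃ m, t m := by
        intro x hx
        obtain ⟨i, hi⟩ := mem_iUnion.mp (hUc hx)
        refine mem_iUnion.mpr ⟨i.1, ?_⟩
        have : t i.1 = U i := by
          rw [ht]
          simp [i.isLt]
        rw [this]
        exact hi
      have hdm : ∀ m, Metric.diam (t m) ≤ δ₀ := by
        intro m
        by_cases h : m < N
        · have : t m = U ⟨m, h⟩ := by rw [ht]; simp [h]
          rw [this]
          exact hUd ⟨m, h⟩
        · have : t m = ∅ := by rw [ht]; simp [h]
          rw [this, Metric.diam_empty]
          exact hδ₀pos.le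
      have h1 := master t hcov hdm
      have hzero : ∀ m ∉ Finset.range N,
          ENNReal.ofReal (β^(l+1) / D^s * (Metric.diam (t m))^s) = 0 := by
        intro m hm
        rw [Finset.mem_range, not_lt] at hm
        have he : t m = ∅ := by rw [ht]; simp [not_lt.mpr hm]
        rw [he, Metric.diam_empty, Real.zero_rpow hs0.ne', mul_zero, ENNReal.ofReal_zero]
      rw [tsum_eq_sum hzero] at h1
      have hsum : ∑ m ∈ Finset.range N, ENNReal.ofReal (β^(l+1) / D^s * (Metric.diam (t m))^s)
          = ENNReal.ofReal (∑ m ∈ Finset.range N, β^(l+1) / D^s * (Metric.diam (t m))^s) := by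
        rw [ENNReal.ofReal_sum_of_nonneg]
        intro m _
        have : (0:ℝ) ≤ (Metric.diam (t m))^s := Real.rpow_nonneg Metric.diam_nonneg _
        positivity
      rw [hsum, ENNReal.one_le_ofReal] at h1
      have hEq : ∑ m ∈ Finset.range N, β^(l+1)/D^s * (Metric.diam (t m))^s
          = ∑ i : Fin N, β^(l+1)/D^s * (Metric.diam (U i))^s := by
        rw [← Fin.sum_univ_eq_sum_range]
        refine Finset.sum_congr rfl fun i _ => ?_
        congr 2
        rw [ht]
        simp [i.isLt]
      rw [hEq, ← Finset.mul_sum] at h1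
      have hS : D^s / β^(l+1) ≤ ∑ i : Fin N, (Metric.diam (U i))^s := by
        have h7 := mul_le_mul_of_nonneg_left h1 hDs.le
        rw [mul_one] at h7
        have h8 : D^s * (β^(l+1)/D^s * ∑ i : Fin N, (Metric.diam (U i))^s)
            = β^(l+1) * ∑ i : Fin N, (Metric.diam (U i))^s := by
          field_simp
        rw [h8] at h7
        rw [div_le_iff₀ (pow_pos hβ0 (l+1))]
        linarith [h7]
      have hb1 : β - 1 ≤ β^(l+1) :=
        le_trans (by linarith) (le_self_pow₀ hβ1.le (Nat.succ_ne_zero l))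
      have hz : β ^ (-(2 * ((l:ℤ) + 1))) = ((β^(2*l+2))⁻¹ : ℝ) := by
        rw [show (-(2 * ((l:ℤ) + 1))) = -((2*l+2 : ℕ) : ℤ) by push_cast; ring,
          zpow_neg, zpow_natCast]
      have hkey2 : (β - 1) * β^(l+1) ≤ β^(2*l+2) := by
        have hpa : β^(2*l+2) = β^(l+1) * β^(l+1) := by
          rw [← pow_add]
          congr 1
          ring
        rw [hpa]
        exact mul_le_mul_of_nonneg_right hb1 (pow_pos hβ0 _).le
      have hfin : β ^ (-(2 * ((l:ℤ) + 1))) * (β - 1) * D^s ≤ D^s / β^(l+1) := by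
        rw [hz, inv_mul_eq_div, div_mul_eq_mul_div,
          div_le_div_iff₀ (pow_pos hβ0 (2*l+2)) (pow_pos hβ0 (l+1))]
        nlinarith [mul_le_mul_of_nonneg_left hkey2 hDs.le]
      exact le_trans hfin hS
  · -- dimension bound
    have h1 : μH[((s.toNNReal : ℝ≥0) : ℝ)] Eβ ≠ 0 := by
      rw [Real.coe_toNNReal s hs0.le]
      exact hHpos.ne'
    have h2 := le_dimH_of_hausdorffMeasure_ne_zero h1
    have h3 : ENNReal.ofReal s = ((s.toNNReal : ℝ≥0) : ℝ≥0∞) := rfl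
    rw [h3]
    exact h2
end

section
/- Let α > 2 and for each k ≥ 1 let A_k be the set of α-admissible words (i_1,…,i_k) such that (i_1,…,i_{k−1}, i_k + 1) is also α-admissible, and S_α^k the set of all α-admissible words of length k. Then for every k ≥ 1, |A_k| / |S_α^k| ≥ (⌊α⌋ − 1)/⌊α⌋. -/
open Set Filter MeasureTheory Topology

/-- `S_α^k`: the set of α-admissible words of length `k`. -/
def betaWord (β : ℝ) (k : ℕ) : Set (Fin k → ℕ) :=
  {w | ∃ x ∈ Set.Ico (0 : ℝ) 1, ∀ i : Fin k, w i = betaDigit β x i}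

/-- `A_k`: the α-admissible words `(i_1,…,i_k)` such that `(i_1,…,i_{k-1}, i_k + 1)` is also
α-admissible. -/
def betaWordInc (α : ℝ) (k : ℕ) : Set (Fin k → ℕ) :=
  {w | w ∈ betaWord α k ∧
    (fun i : Fin k => if (i : ℕ) = k - 1 then w i + 1 else w i) ∈ betaWord α k}

namespace Stmt8

/-- `x` realizes the word `w`. -/
def Realizes (α : ℝ) {k : ℕ} (w : Fin k → ℕ) (x : ℝ) : Prop :=
  x ∈ Set.Ico (0 : ℝ) 1 ∧ ∀ i : Fin k, w i = betaDigit α x i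

/-- `y` is reachable from the cylinder of `w`. -/
def Reach (α : ℝ) {k : ℕ} (w : Fin k → ℕ) (y : ℝ) : Prop :=
  ∃ x, Realizes α w x ∧ (betaT α)^[k] x = y

def IsFull (α : ℝ) {k : ℕ} (w : Fin k → ℕ) : Prop :=
  ∀ y ∈ Set.Ico (0 : ℝ) 1, Reach α w y

lemma mem_betaWord {α : ℝ} {k : ℕ} {w : Fin k → ℕ} :
    w ∈ betaWord α k ↔ ∃ x, Realizes α w x := by
  constructor
  · rintro ⟨x, h1, h2⟩; exact ⟨x, h1, h2⟩
  · rintro ⟨x, h1, h2⟩; exact ⟨x, h1, h2⟩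

lemma betaT_mem (α x : ℝ) : betaT α x ∈ Set.Ico (0 : ℝ) 1 :=
  ⟨Int.fract_nonneg _, Int.fract_lt_one _⟩

lemma iter_mem {α : ℝ} {x : ℝ} (hx : x ∈ Set.Ico (0 : ℝ) 1) (n : ℕ) :
    (betaT α)^[n] x ∈ Set.Ico (0 : ℝ) 1 := by
  cases n with
  | zero => exact hx
  | succ m => rw [Function.iterate_succ_apply']; exact betaT_mem _ _

lemma betaT_le {α x : ℝ} (hα : 0 < α) (hx : 0 ≤ x) : betaT α x ≤ α * x :=
  sub_le_self _ (by exact_mod_cast Int.floor_nonneg.2 (by positivity))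

lemma iter_le {α : ℝ} (hα : 0 < α) {x : ℝ} (hx : 0 ≤ x) (n : ℕ) :
    (betaT α)^[n] x ≤ α ^ n * x := by
  induction n generalizing x with
  | zero => simpa using le_refl x
  | succ m ih =>
    rw [Function.iterate_succ_apply]
    calc (betaT α)^[m] (betaT α x) ≤ α ^ m * betaT α x :=
          ih (betaT_mem α x).1
      _ ≤ α ^ m * (α * x) := by
          exact mul_le_mul_of_nonneg_left (betaT_le hα hx) (by positivity)
      _ = α ^ (m + 1) * x := by ring

lemma digit_succ (α x : ℝ) (n : ℕ) :
    betaDigit α x (n + 1) = betaDigit α (betaT α x) n := by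
  simp [betaDigit, Function.iterate_succ_apply]

/-- The key shift lemma: subtracting `δ/α^k` from `x` keeps the first `k` digits
and lowers `T^k x` by `δ`. -/
lemma shift {α : ℝ} (hα : 0 < α) :
    ∀ (k : ℕ) (x : ℝ), x ∈ Set.Ico (0:ℝ) 1 → ∀ δ : ℝ, 0 ≤ δ → δ ≤ (betaT α)^[k] x →
      (x - δ / α ^ k ∈ Set.Ico (0:ℝ) 1) ∧
      (∀ j : ℕ, j < k → betaDigit α (x - δ / α ^ k) j = betaDigit α x j) ∧
      (betaT α)^[k] (x - δ / α ^ k) = (betaT α)^[k] x - δ := by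
  intro k
  induction k with
  | zero =>
    intro x hx δ hδ0 hδ1
    simp only [pow_zero, div_one, Function.iterate_zero, id]
    refine ⟨⟨by simp at hδ1 ⊢; linarith [hx.1], by have := hx.2; linarith⟩,
      fun j hj => absurd hj (Nat.not_lt_zero j), by simp⟩
  | succ m ih =>
    intro x hx δ hδ0 hδ1
    rw [Function.iterate_succ_apply] at hδ1
    have hTx := betaT_mem α x
    have hδα : δ ≤ α ^ m * betaT α x := le_trans hδ1 (iter_le hα hTx.1 m)
    have hαm : (0:ℝ) < α ^ m := by positivity
    have ht : δ / α ^ m ≤ betaT α x := by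
      rw [div_le_iff₀ hαm]; linarith [hδα]
    have ht0 : 0 ≤ δ / α ^ m := by positivity
    set x' := x - δ / α ^ (m + 1) with hx'def
    have hαx' : α * x' = α * x - δ / α ^ m := by
      rw [hx'def]; field_simp; ring
    have h1 : α * x = (⌊α * x⌋ : ℝ) + betaT α x := (Int.floor_add_fract (α * x)).symm
    have hfloor : ⌊α * x'⌋ = ⌊α * x⌋ := by
      rw [Int.floor_eq_iff]
      refine ⟨?_, ?_⟩
      · rw [hαx']; linarith
      · rw [hαx']; push_cast
        have := (betaT_mem α x).2
        have : betaT α x < 1 := this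
        linarith
    have hTx' : betaT α x' = betaT α x - δ / α ^ m := by
      have e1 : betaT α x' = α * x' - (⌊α * x'⌋ : ℝ) := rfl
      rw [e1, hfloor, hαx']
      have e2 : betaT α x = α * x - (⌊α * x⌋ : ℝ) := rfl
      rw [e2]; ring
    have hx'mem : x' ∈ Set.Ico (0:ℝ) 1 := by
      have hle : δ ≤ α ^ (m+1) * x := le_trans hδ1 (by
        rw [← Function.iterate_succ_apply]
        exact iter_le hα hx.1 (m+1))
      have hp : (0:ℝ) < α ^ (m+1) := by positivity
      constructor
      · have h2 : δ / α ^ (m+1) ≤ x := by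
          rw [div_le_iff₀ hp]; linarith [hle, mul_comm (α ^ (m+1)) x]
        rw [hx'def]; linarith
      · have h3 : 0 ≤ δ / α ^ (m+1) := by positivity
        have := hx.2
        rw [hx'def]; linarith
    obtain ⟨hmem2, hdig2, hiter2⟩ := ih (betaT α x) hTx δ hδ0 hδ1
    rw [← hTx'] at hmem2 hdig2 hiter2
    refine ⟨hx'mem, ?_, ?_⟩
    · intro j hj
      cases j with
      | zero =>
        simp only [betaDigit, Function.iterate_zero, id]
        have h0 : (0:ℝ) ≤ α * x := mul_nonneg hα.le hx.1
        have h0' : (0:ℝ) ≤ α * x' := mul_nonneg hα.le hx'mem.1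
        have e1 : (⌊α * x'⌋₊ : ℤ) = ⌊α * x'⌋ := Int.natCast_floor_eq_floor h0'
        have e2 : (⌊α * x⌋₊ : ℤ) = ⌊α * x⌋ := Int.natCast_floor_eq_floor h0
        rw [hfloor] at e1
        omega
      | succ j' =>
        rw [digit_succ, digit_succ]
        exact hdig2 j' (Nat.lt_of_succ_lt_succ hj)
    · rw [Function.iterate_succ_apply, Function.iterate_succ_apply]
      exact hiter2

lemma reach_mem {α : ℝ} {k : ℕ} {w : Fin k → ℕ} {y : ℝ} (h : Reach α w y) :
    y ∈ Set.Ico (0:ℝ) 1 := by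
  obtain ⟨x, ⟨hx, _⟩, hy⟩ := h
  rw [← hy]; exact iter_mem hx k

lemma reach_down {α : ℝ} (hα : 0 < α) {k : ℕ} {w : Fin k → ℕ} {y y' : ℝ}
    (h : Reach α w y) (h0 : 0 ≤ y') (h1 : y' ≤ y) : Reach α w y' := by
  obtain ⟨x, ⟨hx, hd⟩, hy⟩ := h
  obtain ⟨hm, hdig, hit⟩ := shift hα k x hx (y - y') (by linarith) (by rw [hy]; linarith)
  exact ⟨x - (y - y') / α ^ k, ⟨hm, fun i => (hd i).trans (hdig i i.isLt).symm⟩,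
    by rw [hit, hy]; ring⟩

lemma realizes_snoc {α : ℝ} {k : ℕ} {w : Fin k → ℕ} {d : ℕ} {x : ℝ} :
    Realizes α (Fin.snoc w d) x ↔ Realizes α w x ∧ d = betaDigit α x k := by
  constructor
  · rintro ⟨hx, hd⟩
    refine ⟨⟨hx, fun i => ?_⟩, ?_⟩
    · have := hd i.castSucc
      simpa [Fin.snoc_castSucc] using this
    · have := hd (Fin.last k)
      simpa [Fin.snoc_last] using this
  · rintro ⟨⟨hx, hd⟩, hlast⟩
    refine ⟨hx, fun i => ?_⟩
    induction i using Fin.lastCases with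
    | last => simpa [Fin.snoc_last] using hlast
    | cast j => simpa [Fin.snoc_castSucc] using hd j

lemma mem_snoc_iff {α : ℝ} {k : ℕ} {w : Fin k → ℕ} {d : ℕ} :
    Fin.snoc w d ∈ betaWord α (k + 1) ↔ ∃ y, Reach α w y ∧ d = ⌊α * y⌋₊ := by
  rw [mem_betaWord]
  constructor
  · rintro ⟨x, hx⟩
    rw [realizes_snoc] at hx
    exact ⟨(betaT α)^[k] x, ⟨x, hx.1, rfl⟩, hx.2⟩
  · rintro ⟨y, ⟨x, hx, hxy⟩, hd⟩
    refine ⟨x, realizes_snoc.2 ⟨hx, ?_⟩⟩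
    rw [hd, ← hxy]; rfl

lemma floor_nat_add {d : ℕ} {y : ℝ} (h0 : 0 ≤ y) (h1 : y < 1) : ⌊(d:ℝ) + y⌋₊ = d := by
  rw [Nat.floor_eq_iff (by positivity)]
  constructor <;> [skip; push_cast] <;> linarith

/-- Initial segment property: digits following a word form `{0, …, m}`. -/
lemma mem_snoc_mono {α : ℝ} (hα : 0 < α) {k : ℕ} {w : Fin k → ℕ} {d d' : ℕ}
    (h : Fin.snoc w d' ∈ betaWord α (k + 1)) (hdd : d ≤ d') :
    Fin.snoc w d ∈ betaWord α (k + 1) := by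
  obtain ⟨y', hy', hd'⟩ := mem_snoc_iff.1 h
  have hy'mem := reach_mem hy'
  have hfl : (d' : ℝ) ≤ α * y' := by
    rw [hd']; exact Nat.floor_le (mul_nonneg hα.le hy'mem.1)
  have hle : (d : ℝ) / α ≤ y' := by
    rw [div_le_iff₀ hα]
    calc (d : ℝ) ≤ d' := by exact_mod_cast hdd
      _ ≤ α * y' := hfl
      _ = y' * α := mul_comm _ _
  refine mem_snoc_iff.2 ⟨(d : ℝ) / α, reach_down hα hy' (by positivity) hle, ?_⟩
  rw [mul_div_cancel₀ _ (ne_of_gt hα)]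
  simp

/-- A non-maximal child is a full word. -/
lemma full_of_succ_mem {α : ℝ} (hα : 0 < α) {k : ℕ} {w : Fin k → ℕ} {d : ℕ}
    (h1 : Fin.snoc w (d + 1) ∈ betaWord α (k + 1)) : IsFull α (Fin.snoc w d) := by
  intro y hy
  obtain ⟨y', hy', hd'⟩ := mem_snoc_iff.1 h1
  have hy'mem := reach_mem hy'
  have hfl : ((d : ℝ) + 1) ≤ α * y' := by
    have : ((d + 1 : ℕ) : ℝ) ≤ α * y' := by
      rw [hd']; exact Nat.floor_le (mul_nonneg hα.le hy'mem.1)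
    push_cast at this; linarith
  have hzle : ((d : ℝ) + y) / α ≤ y' := by
    rw [div_le_iff₀ hα]
    have := hy.2
    calc (d : ℝ) + y ≤ (d : ℝ) + 1 := by linarith
      _ ≤ α * y' := hfl
      _ = y' * α := mul_comm _ _
  have hz0 : (0:ℝ) ≤ ((d : ℝ) + y) / α := by
    have := hy.1; positivity
  obtain ⟨x, hx, hxz⟩ := reach_down hα hy' hz0 hzle
  have hαz : α * (((d : ℝ) + y) / α) = (d : ℝ) + y := mul_div_cancel₀ _ (ne_of_gt hα)
  refine ⟨x, realizes_snoc.2 ⟨hx, ?_⟩, ?_⟩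
  · show d = ⌊α * (betaT α)^[k] x⌋₊
    rw [hxz, hαz, floor_nat_add hy.1 hy.2]
  · rw [Function.iterate_succ_apply', hxz]
    show Int.fract (α * (((d : ℝ) + y) / α)) = y
    rw [hαz]
    rw [Int.fract_natCast_add, Int.fract_eq_self.2 ⟨hy.1, hy.2⟩]

/-- A full word has a full child for every digit `d` with `d + 1 ≤ α`. -/
lemma full_child {α : ℝ} (hα : 0 < α) {k : ℕ} {w : Fin k → ℕ}
    (hw : IsFull α w) {d : ℕ} (hd : (d : ℝ) + 1 ≤ α) : IsFull α (Fin.snoc w d) := by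
  intro y hy
  have hz1 : ((d : ℝ) + y) / α < 1 := by
    rw [div_lt_one hα]; have := hy.2; linarith
  have hz0 : (0:ℝ) ≤ ((d : ℝ) + y) / α := by have := hy.1; positivity
  obtain ⟨x, hx, hxz⟩ := hw (((d : ℝ) + y) / α) ⟨hz0, hz1⟩
  have hαz : α * (((d : ℝ) + y) / α) = (d : ℝ) + y := mul_div_cancel₀ _ (ne_of_gt hα)
  refine ⟨x, realizes_snoc.2 ⟨hx, ?_⟩, ?_⟩
  · show d = ⌊α * (betaT α)^[k] x⌋₊
    rw [hxz, hαz, floor_nat_add hy.1 hy.2]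
  · rw [Function.iterate_succ_apply', hxz]
    show Int.fract (α * (((d : ℝ) + y) / α)) = y
    rw [hαz, Int.fract_natCast_add, Int.fract_eq_self.2 ⟨hy.1, hy.2⟩]

/-- A full word has a child for every digit `d < α`. -/
lemma full_mem_child {α : ℝ} (hα : 0 < α) {k : ℕ} {w : Fin k → ℕ}
    (hw : IsFull α w) {d : ℕ} (hd : (d : ℝ) < α) : Fin.snoc w d ∈ betaWord α (k + 1) := by
  have hz1 : (d : ℝ) / α < 1 := by rw [div_lt_one hα]; exact hd
  have hz0 : (0:ℝ) ≤ (d : ℝ) / α := by positivity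
  refine mem_snoc_iff.2 ⟨(d:ℝ)/α, hw _ ⟨hz0, hz1⟩, ?_⟩
  rw [mul_div_cancel₀ _ (ne_of_gt hα)]
  simp

lemma isFull_zero (α : ℝ) (w : Fin 0 → ℕ) : IsFull α w :=
  fun y hy => ⟨y, ⟨hy, fun i => i.elim0⟩, by simp⟩

lemma init_mem {α : ℝ} {k : ℕ} {w : Fin (k+1) → ℕ} (h : w ∈ betaWord α (k+1)) :
    Fin.init w ∈ betaWord α k := by
  obtain ⟨x, hx, hd⟩ := mem_betaWord.1 h
  refine mem_betaWord.2 ⟨x, hx, fun i => ?_⟩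
  have := hd i.castSucc
  simpa [Fin.init, Fin.coe_castSucc] using this

lemma exists_child {α : ℝ} {k : ℕ} {w : Fin k → ℕ} (h : w ∈ betaWord α k) :
    ∃ d : ℕ, Fin.snoc w d ∈ betaWord α (k+1) := by
  obtain ⟨x, hx, hd⟩ := mem_betaWord.1 h
  exact ⟨betaDigit α x k, mem_betaWord.2 ⟨x, realizes_snoc.2 ⟨⟨hx, hd⟩, rfl⟩⟩⟩

lemma digit_lt {α : ℝ} (hα : 0 < α) {k : ℕ} {w : Fin k → ℕ} (h : w ∈ betaWord α k)
    (i : Fin k) : (w i : ℝ) < α := by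
  obtain ⟨x, hx, hd⟩ := mem_betaWord.1 h
  rw [hd i]
  have hm := iter_mem (α := α) hx (i : ℕ)
  have h0 : (0:ℝ) ≤ α * (betaT α)^[(i:ℕ)] x := mul_nonneg hα.le hm.1
  calc ((betaDigit α x i : ℕ) : ℝ) ≤ α * (betaT α)^[(i:ℕ)] x := Nat.floor_le h0
    _ < α * 1 := by
        have := hm.2
        exact mul_lt_mul_of_pos_left this hα
    _ = α := mul_one α

lemma bump_eq_snoc {k : ℕ} (w : Fin (k+1) → ℕ) :
    (fun i : Fin (k+1) => if (i : ℕ) = (k+1) - 1 then w i + 1 else w i)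
      = Fin.snoc (Fin.init w) (w (Fin.last k) + 1) := by
  funext i
  induction i using Fin.lastCases with
  | last => simp [Fin.snoc_last]
  | cast j =>
    have h1 : ((j.castSucc : Fin (k+1)) : ℕ) ≠ (k+1) - 1 := by
      simp only [Fin.coe_castSucc, Nat.add_sub_cancel]
      exact Nat.ne_of_lt j.isLt
    simp only [h1, if_false, Fin.snoc_castSucc]
    rfl

lemma mem_inc_iff {α : ℝ} {k : ℕ} {w : Fin (k+1) → ℕ} :
    w ∈ betaWordInc α (k+1) ↔ w ∈ betaWord α (k+1) ∧
      Fin.snoc (Fin.init w) (w (Fin.last k) + 1) ∈ betaWord α (k+1) := by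
  unfold betaWordInc
  rw [Set.mem_setOf_eq, bump_eq_snoc]

lemma inc_full {α : ℝ} (hα : 0 < α) {k : ℕ} {w : Fin (k+1) → ℕ}
    (h : w ∈ betaWordInc α (k+1)) : IsFull α w := by
  obtain ⟨h1, h2⟩ := mem_inc_iff.1 h
  have := full_of_succ_mem hα h2
  rwa [Fin.snoc_init_self] at this

lemma word_finite {α : ℝ} (hα : 0 < α) (k : ℕ) : (betaWord α k).Finite := by
  apply Set.Finite.subset (Set.Finite.pi (fun i : Fin k => Set.finite_Iic ⌊α⌋₊))
  intro w hw
  rw [Set.mem_pi]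
  intro i _
  rw [Set.mem_Iic, Nat.le_floor_iff hα.le]
  exact (digit_lt hα hw i).le

lemma ncard_prod {X Y : Type*} (s : Set X) (t : Set Y) :
    (s ×ˢ t).ncard = s.ncard * t.ncard := by
  rw [← Nat.card_coe_set_eq, ← Nat.card_coe_set_eq, ← Nat.card_coe_set_eq, ← Nat.card_prod]
  exact Nat.card_congr (Equiv.Set.prod s t)

lemma snoc_injective {k : ℕ} :
    Function.Injective (fun p : (Fin k → ℕ) × ℕ => Fin.snoc p.1 p.2 : _ → Fin (k+1) → ℕ) := by
  rintro ⟨w, d⟩ ⟨w', d'⟩ h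
  simp only at h
  have h1 : w = w' := by
    have := congrArg Fin.init h
    simpa [Fin.init_snoc] using this
  have h2 : d = d' := by
    have := congrArg (fun f => f (Fin.last k)) h
    simpa [Fin.snoc_last] using this
  simp [h1, h2]

lemma ncard_Iio_nat (c : ℕ) : (Set.Iio c).ncard = c := by
  rw [← Finset.coe_Iio, Set.ncard_coe_finset, Nat.card_Iio]

/-- Main counting lemma: if every word in `A ⊆ S_k` has children `0, …, c-1`, then
`|S_{k+1}| ≥ c|A| + |S_k \ A|`. -/
lemma count_main {α : ℝ} (hα : 0 < α) {k c : ℕ} {A : Set (Fin k → ℕ)}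
    (hAS : A ⊆ betaWord α k)
    (hfull : ∀ w ∈ A, ∀ d, d < c → Fin.snoc w d ∈ betaWord α (k+1)) :
    c * A.ncard + ((betaWord α k) \ A).ncard ≤ (betaWord α (k+1)).ncard := by
  have hfin' := word_finite hα (k+1)
  have hfin := word_finite hα k
  set f := fun p : (Fin k → ℕ) × ℕ => (Fin.snoc p.1 p.2 : Fin (k+1) → ℕ) with hf
  set E1 := f '' (A ×ˢ Set.Iio c) with hE1def
  set E2 := {v ∈ betaWord α (k+1) | Fin.init v ∈ betaWord α k \ A} with hE2def
  have hE1S : E1 ⊆ betaWord α (k+1) := by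
    rintro v ⟨⟨w, d⟩, ⟨hw, hd⟩, rfl⟩
    exact hfull w hw d hd
  have hE2S : E2 ⊆ betaWord α (k+1) := fun v hv => hv.1
  have hdisj : Disjoint E1 E2 := by
    rw [Set.disjoint_left]
    rintro v ⟨⟨w, d⟩, ⟨hw, _⟩, rfl⟩ hv2
    have h2 := hv2.2
    have he : Fin.init (f (w, d)) = w := Fin.init_snoc _ _
    rw [he] at h2
    exact h2.2 hw
  have hE1card : E1.ncard = c * A.ncard := by
    rw [hE1def, Set.ncard_image_of_injOn (snoc_injective.injOn), ncard_prod,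
      ncard_Iio_nat, mul_comm]
  have hE2card : (betaWord α k \ A).ncard ≤ E2.ncard := by
    have hsub : betaWord α k \ A ⊆ Fin.init '' E2 := by
      intro w hw
      obtain ⟨d, hd⟩ := exists_child hw.1
      refine ⟨Fin.snoc w d, ⟨hd, ?_⟩, Fin.init_snoc _ _⟩
      rw [Fin.init_snoc]; exact hw
    calc (betaWord α k \ A).ncard ≤ (Fin.init '' E2).ncard :=
          Set.ncard_le_ncard hsub ((hfin'.subset hE2S).image _)
      _ ≤ E2.ncard := Set.ncard_image_le (hfin'.subset hE2S)
  calc c * A.ncard + (betaWord α k \ A).ncard ≤ E1.ncard + E2.ncard := by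
        rw [hE1card]; exact Nat.add_le_add_left hE2card _
    _ = (E1 ∪ E2).ncard := (Set.ncard_union_eq hdisj (hfin'.subset hE1S)
        (hfin'.subset hE2S)).symm
    _ ≤ (betaWord α (k+1)).ncard := Set.ncard_le_ncard (Set.union_subset hE1S hE2S) hfin'

/-- The "max child" injection: `|S_{k+1} \ A_{k+1}| ≤ |S_k|`. -/
lemma diff_card_le {α : ℝ} (hα : 0 < α) (k : ℕ) :
    ((betaWord α (k+1)) \ betaWordInc α (k+1)).ncard ≤ (betaWord α k).ncard := by
  refine Set.ncard_le_ncard_of_injOn Fin.init (fun v hv => init_mem hv.1) ?_ (word_finite hα k)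
  intro v hv v' hv' hinit
  by_contra hne
  have hd : v (Fin.last k) ≠ v' (Fin.last k) := by
    intro he
    apply hne
    rw [← Fin.snoc_init_self v, ← Fin.snoc_init_self v', hinit, he]
  have main : ∀ u u' : Fin (k+1) → ℕ, u ∈ betaWord α (k+1) \ betaWordInc α (k+1) →
      u' ∈ betaWord α (k+1) → Fin.init u = Fin.init u' →
      u (Fin.last k) < u' (Fin.last k) → False := by
    intro u u' hu hu' hi hlt
    apply (Set.notMem_of_mem_diff hu)
    rw [mem_inc_iff]
    refine ⟨hu.1, ?_⟩
    have h1 : Fin.snoc (Fin.init u') (u' (Fin.last k)) ∈ betaWord α (k+1) := by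
      rw [Fin.snoc_init_self]; exact hu'
    rw [hi]
    exact mem_snoc_mono hα h1 hlt
  rcases Nat.lt_or_ge (v (Fin.last k)) (v' (Fin.last k)) with h | h
  · exact main v v' hv hv'.1 hinit h
  · exact main v' v hv' hv.1 hinit.symm (lt_of_le_of_ne h (Ne.symm hd))

lemma floor_le_alpha {α : ℝ} (hα : 2 < α) : (⌊α⌋₊ : ℝ) ≤ α := Nat.floor_le (by linarith)

lemma two_le_floor {α : ℝ} (hα : 2 < α) : 2 ≤ ⌊α⌋₊ := Nat.le_floor (by exact_mod_cast hα.le)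

/-- In the integer case `⌊α⌋ = α`, every admissible word is full. -/
lemma int_all_full {α : ℝ} (hα : 2 < α) (hint : (⌊α⌋₊ : ℝ) = α) :
    ∀ k, ∀ w : Fin k → ℕ, w ∈ betaWord α k → IsFull α w := by
  have hα0 : (0:ℝ) < α := by linarith
  intro k
  induction k with
  | zero => exact fun w _ => isFull_zero α w
  | succ m ih =>
    intro w hw
    rw [← Fin.snoc_init_self w]
    have h1 : Fin.init w ∈ betaWord α m := init_mem hw
    have h2 : (w (Fin.last m) : ℝ) < α := digit_lt hα0 hw (Fin.last m)
    have h3 : (w (Fin.last m) : ℝ) + 1 ≤ α := by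
      rw [← hint] at h2 ⊢
      have : w (Fin.last m) < ⌊α⌋₊ := by exact_mod_cast h2
      exact_mod_cast this
    exact full_child hα0 (ih _ h1) h3

/-- The key inequality: `|S_{k+1}| ≥ ⌊α⌋ |S_k|`. -/
lemma key_ineq {α : ℝ} (hα : 2 < α) (k : ℕ) :
    ⌊α⌋₊ * (betaWord α k).ncard ≤ (betaWord α (k+1)).ncard := by
  have hα0 : (0:ℝ) < α := by linarith
  rcases eq_or_lt_of_le (floor_le_alpha hα) with hint | hlt
  · -- integer case: take A = S_k
    have h := count_main hα0 (c := ⌊α⌋₊) (A := betaWord α k) (le_refl _)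
      (fun w hw d hd => full_mem_child hα0 (int_all_full hα hint k w hw)
        (by rw [← hint]; exact_mod_cast hd))
    calc ⌊α⌋₊ * (betaWord α k).ncard ≤
          ⌊α⌋₊ * (betaWord α k).ncard + ((betaWord α k) \ betaWord α k).ncard :=
          Nat.le_add_right _ _
      _ ≤ _ := h
  · -- non-integer case: induct on k
    induction k with
    | zero =>
      have h := count_main hα0 (c := ⌊α⌋₊) (A := betaWord α 0) (le_refl _)
        (fun w hw d hd => full_mem_child hα0 (isFull_zero α w)
          (lt_of_le_of_lt (by exact_mod_cast Nat.le_of_lt_succ (Nat.lt_succ_of_lt hd) : (d:ℝ) ≤ (⌊α⌋₊:ℝ)) hlt))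
      exact le_trans (Nat.le_add_right _ _) h
    | succ m ih =>
      set N := ⌊α⌋₊ with hN
      set A := betaWordInc α (m+1) with hA
      have hAS : A ⊆ betaWord α (m+1) := fun w hw => hw.1
      have hfull : ∀ w ∈ A, ∀ d, d < N + 1 → Fin.snoc w d ∈ betaWord α (m+2) :=
        fun w hw d hd => full_mem_child hα0 (inc_full hα0 hw)
          (lt_of_le_of_lt (by exact_mod_cast Nat.le_of_lt_succ hd : (d:ℝ) ≤ (N : ℝ)) hlt)
      have hcount := count_main hα0 hAS hfull
      have hdiff := diff_card_le hα0 m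
      have hfin := word_finite hα0 (m+1)
      have hALe : A.ncard ≤ (betaWord α (m+1)).ncard := Set.ncard_le_ncard hAS hfin
      have hsplit : A.ncard + ((betaWord α (m+1)) \ A).ncard = (betaWord α (m+1)).ncard := by
        rw [Set.ncard_diff hAS (hfin.subset hAS)]
        omega
      -- arithmetic
      set a := A.ncard
      set dd := ((betaWord α (m+1)) \ A).ncard
      set s := (betaWord α (m+1)).ncard
      set t := (betaWord α m).ncard
      set u := (betaWord α (m+2)).ncard
      -- hcount : (N+1)*a + dd ≤ u, hsplit : a + dd = s, hdiff : dd ≤ t, ih : N*t ≤ s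
      calc N * s = N * a + N * dd := by rw [← hsplit]; ring
        _ ≤ N * a + N * t := by
            exact Nat.add_le_add_left (Nat.mul_le_mul_left N hdiff) _
        _ ≤ N * a + s := Nat.add_le_add_left ih _
        _ = N * a + (a + dd) := by rw [hsplit]
        _ = (N + 1) * a + dd := by ring
        _ ≤ u := hcount

end Stmt8

/-- For `α > 2` and every `k ≥ 1`, `|A_k| / |S_α^k| ≥ (⌊α⌋ - 1)/⌊α⌋`. -/
theorem stmt8 (α : ℝ) (hα : 2 < α) (k : ℕ) (hk : 1 ≤ k) :
    ((⌊α⌋₊ : ℝ) - 1) / (⌊α⌋₊ : ℝ) ≤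
      ((betaWordInc α k).ncard : ℝ) / ((betaWord α k).ncard : ℝ) := by
  have hα0 : (0:ℝ) < α := by linarith
  obtain ⟨m, rfl⟩ : ∃ m, k = m + 1 := ⟨k - 1, (Nat.succ_pred_eq_of_pos hk).symm⟩
  have hN2 : 2 ≤ ⌊α⌋₊ := Stmt8.two_le_floor hα
  have hAS : betaWordInc α (m+1) ⊆ betaWord α (m+1) := fun w hw => hw.1
  have hfin := Stmt8.word_finite hα0 (m+1)
  have hkey := Stmt8.key_ineq hα m
  have hdiff := Stmt8.diff_card_le hα0 m
  set a := (betaWordInc α (m+1)).ncard with ha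
  set dd := ((betaWord α (m+1)) \ betaWordInc α (m+1)).ncard with hdd
  set s := (betaWord α (m+1)).ncard with hs
  set t := (betaWord α m).ncard with ht
  have hALe : a ≤ s := Set.ncard_le_ncard hAS hfin
  have hsplit : a + dd = s := by
    rw [hdd, Set.ncard_diff hAS (hfin.subset hAS)]
    omega
  have hpos : 0 < s := by
    rw [hs, Set.ncard_pos hfin]
    exact ⟨fun i => betaDigit α 0 i,
      Set.mem_setOf_eq ▸ ⟨0, ⟨le_refl _, zero_lt_one⟩, fun i => rfl⟩⟩
  have hNds : ⌊α⌋₊ * dd ≤ s := le_trans (Nat.mul_le_mul_left _ hdiff) hkey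
  have hNpos : (0:ℝ) < (⌊α⌋₊ : ℝ) := by exact_mod_cast Nat.lt_of_lt_of_le (by norm_num) hN2
  have hspos : (0:ℝ) < (s : ℝ) := by exact_mod_cast hpos
  rw [div_le_div_iff₀ hNpos hspos]
  have h1 : ((⌊α⌋₊ : ℕ) : ℝ) * dd ≤ (s : ℝ) := by exact_mod_cast hNds
  have h2 : (a : ℝ) + dd = s := by exact_mod_cast hsplit
  have h3 : ((⌊α⌋₊ : ℕ) : ℝ) * a + (⌊α⌋₊ : ℝ) * dd = (⌊α⌋₊ : ℝ) * s := by
    rw [← h2]; ring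
  linarith
end

section
/- Let Q be the set of β ∈ (2,3] for which the β-expansion of 1 is finite with all digits in {0,2}, i.e. 1 = ε_1/β + ⋯ + ε_k/β^k with every ε_i ∈ {0,2}. For every β ∈ (2,3] \ Q, C_{β;02} is the unique invariant set of the local IFS F_β: any nonempty compact A ⊆ [0,1] with A = f_0(A) ∪ f_2(A ∩ [0,β−2]) equals C_{β;02}. -/
open Set Filter MeasureTheory Topology

/-- The digits of the β-expansion of 1 (0-indexed: `epsSeq β (i-1) = ε_i`). -/
noncomputable def epsSeq (β : ℝ) : ℕ → ℕ
  | 0 => ⌊β⌋₊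
  | n + 1 => betaDigit β (β - ⌊β⌋₊) n

/-- The Cantor-type set `C_{β;02}`. -/
noncomputable def cantor02 (β : ℝ) : Set ℝ :=
  closure {x | x ∈ Set.Ico (0 : ℝ) 1 ∧ ∀ n, betaDigit β x n ∈ ({0, 2} : Set ℕ)}

/-- `Q`: the set of `β ∈ (2,3]` for which the β-expansion of 1 is finite with all digits
in `{0,2}`. -/
noncomputable def Qset : Set ℝ :=
  {β ∈ Set.Ioc (2 : ℝ) 3 | ∃ k, (∀ i < k, epsSeq β i ∈ ({0, 2} : Set ℕ)) ∧
    ∀ i, k ≤ i → epsSeq β i = 0}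

noncomputable def valW (β : ℝ) (l : List ℕ) (t : ℝ) : ℝ :=
  l.foldr (fun d s => ((d : ℝ) + s) / β) t

lemma valW_nil (β t : ℝ) : valW β [] t = t := rfl
lemma valW_cons (β : ℝ) (d : ℕ) (l : List ℕ) (t : ℝ) :
    valW β (d :: l) t = ((d : ℝ) + valW β l t) / β := rfl
lemma valW_append (β : ℝ) (l : List ℕ) (d : ℕ) (t : ℝ) :
    valW β (l ++ [d]) t = valW β l (((d : ℝ) + t) / β) := by
  simp [valW, List.foldr_append]

lemma valW_nonneg {β : ℝ} (hβ : 0 < β) (l : List ℕ) {t : ℝ} (ht : 0 ≤ t) :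
    0 ≤ valW β l t := by
  induction l with
  | nil => exact ht
  | cons d l ih => rw [valW_cons]; positivity

lemma valW_shift {β : ℝ} (hβ : 0 < β) (l : List ℕ) (t : ℝ) :
    valW β l t = valW β l 0 + t / β ^ l.length := by
  induction l with
  | nil => simp [valW_nil]
  | cons d l ih =>
    rw [valW_cons, valW_cons, ih]
    rw [List.length_cons]
    field_simp
    ring

lemma betaT_mem (β x : ℝ) : betaT β x ∈ Set.Ico (0:ℝ) 1 :=
  ⟨Int.fract_nonneg _, Int.fract_lt_one _⟩

lemma betaT_iter_mem {β x : ℝ} (hx : x ∈ Set.Ico (0:ℝ) 1) (n : ℕ) :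
    (betaT β)^[n] x ∈ Set.Ico (0:ℝ) 1 := by
  cases n with
  | zero => exact hx
  | succ n => rw [Function.iterate_succ_apply']; exact betaT_mem β _

lemma betaT_step {β : ℝ} (hβ : 0 < β) (d : ℕ) {x : ℝ} (hx : x ∈ Set.Ico (0:ℝ) 1) :
    betaT β (((d:ℝ) + x) / β) = x := by
  rw [betaT, mul_div_cancel₀ _ (ne_of_gt hβ), add_comm, Int.fract_add_natCast,
    Int.fract_eq_self.mpr ⟨hx.1, hx.2⟩]

lemma floor_step (d : ℕ) {x : ℝ} (hx : x ∈ Set.Ico (0:ℝ) 1) : ⌊(d:ℝ) + x⌋₊ = d := by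
  rw [add_comm, Nat.floor_add_natCast hx.1, Nat.floor_eq_zero.mpr hx.2, zero_add]

lemma digit_of_iter {β : ℝ} (hβ : 0 < β) (x : ℝ) (l : List ℕ)
    (hdig : ∀ d ∈ l, d = 0 ∨ d = 2)
    (hiter : ∀ n, (betaT β)^[n] x = valW β (l.drop n) 0) :
    ∀ n, (betaDigit β x n = 0 ∨ betaDigit β x n = 2) ∧
      (l.length ≤ n → betaDigit β x n = 0) := by
  intro n
  have hβd : betaDigit β x n = ⌊β * valW β (l.drop n) 0⌋₊ := by
    rw [betaDigit, hiter]
  cases hdrop : l.drop n with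
  | nil =>
    rw [hdrop] at hβd
    simp [valW_nil] at hβd
    exact ⟨Or.inl hβd, fun _ => hβd⟩
  | cons e r' =>
    have hr' : r' = l.drop (n+1) := by
      have h1 : List.drop 1 (l.drop n) = l.drop (n + 1) := by
        rw [List.drop_drop]
      rw [hdrop] at h1
      simpa using h1
    have hmem : valW β r' 0 ∈ Set.Ico (0:ℝ) 1 := by
      have h2 : valW β (l.drop (n+1)) 0 = (betaT β)^[n+1] x := (hiter (n+1)).symm
      rw [hr', h2, Function.iterate_succ_apply']
      exact betaT_mem β _
    have hval : β * valW β (l.drop n) 0 = (e:ℝ) + valW β r' 0 := by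
      rw [hdrop, valW_cons, mul_div_cancel₀ _ (ne_of_gt hβ)]
    rw [hval, floor_step e hmem] at hβd
    have hel : e ∈ l := (List.drop_suffix n l).subset (hdrop ▸ (List.mem_cons_self : e ∈ e :: r'))
    refine ⟨hβd ▸ hdig e hel, fun hlen => ?_⟩
    exact absurd (hdrop ▸ List.drop_eq_nil_of_le hlen) (by simp)

lemma lemA {β : ℝ} (hβ : β ∈ Set.Ioc (2:ℝ) 3) (hβQ : β ∉ Qset) :
    ∀ l : List ℕ, (∀ d ∈ l, d = 0 ∨ d = 2) → (∀ s, s <:+ l → valW β s 0 ≤ 1) →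
    valW β l 0 < 1 ∧ ∀ n, (betaT β)^[n] (valW β l 0) = valW β (l.drop n) 0 := by
  obtain ⟨hβ2, hβ3⟩ := hβ
  have hβ0 : (0:ℝ) < β := by linarith
  intro l
  induction l with
  | nil =>
    intro _ _
    refine ⟨by rw [valW_nil]; norm_num, fun n => ?_⟩
    have h0 : betaT β 0 = 0 := by simp [betaT]
    rw [valW_nil, Function.iterate_fixed h0 n, List.drop_nil, valW_nil]
  | cons d r ih =>
    intro hd hs
    obtain ⟨hr1, hr2⟩ := ih (fun e he => hd e (List.mem_cons_of_mem d he))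
      (fun s hsuf => hs s (hsuf.trans (List.suffix_cons d r)))
    have hr0 : 0 ≤ valW β r 0 := valW_nonneg hβ0 r le_rfl
    have hstep : betaT β (valW β (d::r) 0) = valW β r 0 := by
      rw [valW_cons]; exact betaT_step hβ0 d ⟨hr0, hr1⟩
    have hiter : ∀ n, (betaT β)^[n] (valW β (d::r) 0) = valW β ((d::r).drop n) 0 := by
      intro n
      cases n with
      | zero => rfl
      | succ n => rw [Function.iterate_succ_apply, hstep]; exact hr2 n
    refine ⟨?_, hiter⟩
    have hle : valW β (d::r) 0 ≤ 1 := hs _ (List.suffix_refl _)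
    rcases hd d (List.mem_cons_self : d ∈ d :: r) with h0 | h2
    · subst h0
      rw [valW_cons, Nat.cast_zero, zero_add]
      rw [div_lt_one hβ0]
      linarith
    · subst h2
      rcases lt_or_eq_of_le hle with h | h
      · exact h
      -- val = 1 case: derive β ∈ Qset, contradiction
      exfalso
      have hval : valW β r 0 = β - 2 := by
        rw [valW_cons] at h
        push_cast at h
        field_simp at h
        linarith
      have hβlt3 : β < 3 := by rw [hval] at hr1; linarith
      have hfl : ⌊β⌋₊ = 2 := by
        rw [Nat.floor_eq_iff (by linarith)]
        push_cast
        constructor <;> linarith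
      have hdigits := digit_of_iter hβ0 (valW β r 0) r
        (fun e he => hd e (List.mem_cons_of_mem _ he)) hr2
      refine hβQ ⟨⟨hβ2, by linarith⟩, r.length + 1, ?_, ?_⟩
      · intro i hi
        cases i with
        | zero => simp [epsSeq, hfl]
        | succ j =>
          have heps : epsSeq β (j+1) = betaDigit β (valW β r 0) j := by
            rw [epsSeq, hfl, hval]
            norm_num
          rw [heps]
          rcases (hdigits j).1 with h' | h' <;> simp [h']
      · intro i hi
        cases i with
        | zero => omega
        | succ j =>
          have heps : epsSeq β (j+1) = betaDigit β (valW β r 0) j := by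
            rw [epsSeq, hfl, hval]
            norm_num
          rw [heps]
          exact (hdigits j).2 (by omega)

/-- **Theorem 5 (uniqueness part).** For `β ∈ (2,3] \ Q`, `C_{β;02}` is the unique invariant
set of the local IFS `F_β`: any nonempty compact `A ⊆ [0,1]` with
`A = f_0(A) ∪ f_2(A ∩ [0, β-2])` equals `C_{β;02}`. -/
theorem stmt17 (β : ℝ) (hβ : β ∈ Set.Ioc (2 : ℝ) 3) (hβQ : β ∉ Qset)
    (A : Set ℝ) (hne : A.Nonempty) (hcomp : IsCompact A) (hsub : A ⊆ Set.Icc 0 1)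
    (hinv : A = (fun x => x / β) '' A ∪
      (fun x => (x + 2) / β) '' (A ∩ Set.Icc 0 (β - 2))) :
    A = cantor02 β := by
  obtain ⟨hβ2, hβ3⟩ := hβ
  have hβ0 : (0:ℝ) < β := by linarith
  have hβ1 : (1:ℝ) < β := by linarith
  have hclosed : IsClosed A := hcomp.isClosed
  have hpow : Tendsto (fun n : ℕ => β⁻¹ ^ n) atTop (nhds 0) :=
    tendsto_pow_atTop_nhds_zero_of_lt_one (by positivity) (inv_lt_one_of_one_lt₀ hβ1)
  have hf0 : ∀ x ∈ A, x / β ∈ A := by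
    intro x hx
    rw [hinv]
    exact Or.inl ⟨x, hx, rfl⟩
  have hf2 : ∀ x ∈ A, x ≤ β - 2 → (x + 2) / β ∈ A := by
    intro x hx hx2
    rw [hinv]
    exact Or.inr ⟨x, ⟨hx, (hsub hx).1, hx2⟩, rfl⟩
  -- 0 ∈ A
  obtain ⟨a₀, ha₀⟩ := hne
  have h0A : (0:ℝ) ∈ A := by
    have hseq : ∀ n : ℕ, a₀ * β⁻¹ ^ n ∈ A := by
      intro n
      induction n with
      | zero => simpa using ha₀
      | succ n ih =>
        have h := hf0 _ ih
        have heq : a₀ * β⁻¹ ^ n / β = a₀ * β⁻¹ ^ (n+1) := by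
          rw [pow_succ]; field_simp
        rwa [heq] at h
    have ht : Tendsto (fun n : ℕ => a₀ * β⁻¹ ^ n) atTop (nhds 0) := by
      simpa using hpow.const_mul a₀
    exact hclosed.mem_of_tendsto ht (Eventually.of_forall hseq)
  -- truncation claim for direction cantor ⊆ A
  have htrunc : ∀ n : ℕ, ∀ y : ℝ, y ∈ Set.Ico (0:ℝ) 1 →
      (∀ m, betaDigit β y m = 0 ∨ betaDigit β y m = 2) →
      y - (betaT β)^[n] y / β ^ n ∈ A ∧ 0 ≤ y - (betaT β)^[n] y / β ^ n := by
    intro n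
    induction n with
    | zero =>
      intro y hy hd
      have : y - (betaT β)^[0] y / β ^ 0 = 0 := by simp
      rw [this]
      exact ⟨h0A, le_refl _⟩
    | succ n ih =>
      intro y hy hd
      have hTy : betaT β y ∈ Set.Ico (0:ℝ) 1 := betaT_mem β y
      have hdT : ∀ m, betaDigit β (betaT β y) m = 0 ∨ betaDigit β (betaT β y) m = 2 := by
        intro m
        have h := hd (m+1)
        rw [betaDigit, Function.iterate_succ_apply] at h
        exact h
      obtain ⟨hzA, hz0⟩ := ih (betaT β y) hTy hdT
      have hfl : ((⌊β * y⌋₊ : ℕ) : ℝ) = β * y - betaT β y := by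
        have h0 : (⌊β * y⌋₊ : ℤ) = ⌊β * y⌋ :=
          Int.natCast_floor_eq_floor (mul_nonneg hβ0.le hy.1)
        have h1 : ((⌊β * y⌋₊ : ℤ) : ℝ) = ((⌊β * y⌋ : ℤ) : ℝ) := by rw [h0]
        rw [betaT, Int.fract]
        push_cast at h1 ⊢
        linarith
      have hd02 : ⌊β * y⌋₊ = 0 ∨ ⌊β * y⌋₊ = 2 := by
        have h := hd 0
        rw [betaDigit] at h
        simpa using h
      have hrel : y = (((⌊β * y⌋₊ : ℕ) : ℝ) + betaT β y) / β := by
        rw [hfl]; field_simp; ring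
      have hT0 : 0 ≤ (betaT β)^[n] (betaT β y) := (betaT_iter_mem hTy n).1
      have hw : y - (betaT β)^[n+1] y / β ^ (n+1) =
          (((⌊β * y⌋₊ : ℕ) : ℝ) + (betaT β y - (betaT β)^[n] (betaT β y) / β ^ n)) / β := by
        rw [Function.iterate_succ_apply]
        rw [hfl, pow_succ]
        field_simp
        ring
      rcases hd02 with h0 | h2
      · rw [hw, h0]
        push_cast
        rw [zero_add]
        exact ⟨hf0 _ hzA, by positivity⟩
      · have hTyle : betaT β y ≤ β - 2 := by
          have h2' : ((2:ℕ):ℝ) = β * y - betaT β y := by rw [← hfl, h2]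
          push_cast at h2'
          nlinarith [hy.2, hTy.1]
        have hzle : betaT β y - (betaT β)^[n] (betaT β y) / β ^ n ≤ β - 2 := by
          have hpos : 0 ≤ (betaT β)^[n] (betaT β y) / β ^ n := by positivity
          linarith
        rw [hw, h2]
        push_cast
        constructor
        · have h := hf2 _ hzA hzle
          have heq : (betaT β y - (betaT β)^[n] (betaT β y) / β ^ n + 2) / β =
              ((2:ℝ) + (betaT β y - (betaT β)^[n] (betaT β y) / β ^ n)) / β := by ring
          rwa [heq] at h
        · positivity
  have hCsubA : cantor02 β ⊆ A := by
    rw [cantor02]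
    refine closure_minimal ?_ hclosed
    rintro y ⟨hy1, hy2⟩
    have hy2' : ∀ m, betaDigit β y m = 0 ∨ betaDigit β y m = 2 := by
      intro m; have := hy2 m; simpa using this
    have h0 : Tendsto (fun n : ℕ => (betaT β)^[n] y / β ^ n) atTop (nhds 0) := by
      refine squeeze_zero (fun n => div_nonneg (betaT_iter_mem hy1 n).1 (by positivity))
        (fun n => ?_) hpow
      rw [inv_pow, ← one_div]
      gcongr
      exact le_of_lt (betaT_iter_mem hy1 n).2
    have htend : Tendsto (fun n : ℕ => y - (betaT β)^[n] y / β ^ n) atTop (nhds y) := by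
      simpa using tendsto_const_nhds.sub h0
    exact hclosed.mem_of_tendsto htend
      (Eventually.of_forall fun n => (htrunc n y hy1 hy2').1)
  -- direction A ⊆ cantor
  have key : ∀ a : ℝ, ∃ (d : ℕ) (b : ℝ), a ∈ A →
      (d = 0 ∨ d = 2) ∧ b ∈ A ∧ a = ((d:ℝ) + b) / β := by
    intro a
    by_cases ha : a ∈ A
    · have ha' := ha
      rw [hinv] at ha'
      rcases ha' with ⟨y, hy, hya⟩ | ⟨y, ⟨hyA, _⟩, hya⟩
      · refine ⟨0, y, fun _ => ⟨Or.inl rfl, hy, ?_⟩⟩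
        simp only at hya
        rw [← hya]; norm_num
      · refine ⟨2, y, fun _ => ⟨Or.inr rfl, hyA, ?_⟩⟩
        simp only at hya
        rw [← hya]; push_cast; ring
    · exact ⟨0, 0, fun h => absurd h ha⟩
  choose dig nxt hkey using key
  have hAsubC : A ⊆ cantor02 β := by
    intro a haA
    set g : ℕ → ℝ := fun n => (nxt)^[n] a with hg
    set L : ℕ → List ℕ := fun m => (List.range m).map fun i => dig (g i) with hL
    have hgA : ∀ n, g n ∈ A := by
      intro n
      induction n with
      | zero => exact haA
      | succ n ih =>
        have : g (n+1) = nxt (g n) := by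
          simp only [hg]; rw [Function.iterate_succ_apply']
        rw [this]
        exact (hkey _ ih).2.1
    have hgsucc : ∀ m, g (m+1) = nxt (g m) := by
      intro m; simp only [hg]; rw [Function.iterate_succ_apply']
    have hgrel : ∀ m, g m = ((dig (g m) : ℝ) + g (m+1)) / β := by
      intro m; rw [hgsucc]; exact (hkey _ (hgA m)).2.2
    have hLlen : ∀ m, (L m).length = m := by intro m; simp [hL]
    have hLs : ∀ m, L (m+1) = L m ++ [dig (g m)] := by
      intro m; simp [hL, List.range_succ]
    have hadig : ∀ m, ∀ e ∈ L m, e = 0 ∨ e = 2 := by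
      intro m e he
      rw [hL] at he
      simp only [List.mem_map, List.mem_range] at he
      obtain ⟨i, _, hie⟩ := he
      exact hie ▸ (hkey _ (hgA i)).1
    have hgval : ∀ m, ∀ j, j ≤ m → g j = valW β ((L m).drop j) (g m) := by
      intro m
      induction m with
      | zero =>
        intro j hj
        interval_cases j
        have : L 0 = [] := by simp [hL]
        rw [this]
        simp [valW_nil]
      | succ m ih =>
        intro j hj
        rcases Nat.lt_or_ge j (m+1) with h | h
        · have hjm : j ≤ m := by omega
          rw [hLs m, List.drop_append_of_le_length (by rw [hLlen]; exact hjm)]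
          rw [valW_append, ← hgrel m]
          exact ih j hjm
        · have hjeq : j = m + 1 := by omega
          subst hjeq
          rw [List.drop_eq_nil_of_le (by rw [hLlen])]
          rw [valW_nil]
    have hsuffix : ∀ m, ∀ s, s <:+ L m → valW β s 0 ≤ 1 := by
      intro m s hsuf
      obtain ⟨t, ht⟩ := hsuf
      have hj : s = (L m).drop t.length := by rw [← ht, List.drop_left]
      have hjm : t.length ≤ m := by
        have hlen := congrArg List.length ht
        rw [List.length_append, hLlen m] at hlen
        omega
      have h1 : valW β s (g m) = g t.length := by rw [hj, ← hgval m t.length hjm]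
      have h2 : valW β s (g m) = valW β s 0 + g m / β ^ s.length := valW_shift hβ0 s (g m)
      have h3 : 0 ≤ g m / β ^ s.length := div_nonneg (hsub (hgA m)).1 (by positivity)
      have h4 : g t.length ≤ 1 := (hsub (hgA t.length)).2
      linarith
    have hlem : ∀ m, valW β (L m) 0 < 1 ∧
        ∀ n, (betaT β)^[n] (valW β (L m) 0) = valW β ((L m).drop n) 0 :=
      fun m => lemA ⟨hβ2, hβ3⟩ hβQ (L m) (hadig m) (hsuffix m)
    have hmemC : ∀ m, valW β (L m) 0 ∈
        {x : ℝ | x ∈ Set.Ico (0:ℝ) 1 ∧ ∀ n, betaDigit β x n ∈ ({0, 2} : Set ℕ)} := by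
      intro m
      refine ⟨⟨valW_nonneg hβ0 _ le_rfl, (hlem m).1⟩, fun n => ?_⟩
      rcases (digit_of_iter hβ0 _ (L m) (hadig m) (hlem m).2 n).1 with h | h <;> simp [h]
    have hdiff : ∀ m, a - valW β (L m) 0 = g m / β ^ m := by
      intro m
      have h1 : g 0 = valW β (L m) (g m) := by
        have := hgval m 0 (Nat.zero_le m)
        rwa [List.drop_zero] at this
      have hg0 : g 0 = a := rfl
      rw [hg0, valW_shift hβ0, hLlen m] at h1
      linarith
    have h0 : Tendsto (fun m : ℕ => g m / β ^ m) atTop (nhds 0) := by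
      refine squeeze_zero (fun m => div_nonneg (hsub (hgA m)).1 (by positivity))
        (fun m => ?_) hpow
      rw [inv_pow, ← one_div]
      gcongr
      exact (hsub (hgA m)).2
    have htendA : Tendsto (fun m => valW β (L m) 0) atTop (nhds a) := by
      have h1 : Tendsto (fun m : ℕ => a - g m / β ^ m) atTop (nhds a) := by
        simpa using tendsto_const_nhds.sub h0
      refine h1.congr fun m => ?_
      have := hdiff m
      linarith
    rw [cantor02]
    exact mem_closure_of_tendsto htendA (Eventually.of_forall hmemC)
  exact Set.Subset.antisymm hAsubC hCsubA
end
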